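/- arXiv:2011.03205 — 3 statements merged into one kernel-verified Lean document; each statement's English description precedes it below -/
import Mathlib

section
/- Let G be a prime graph with at least 4 vertices, let A be a fully closed set, and let v ∈ A. If G∖v is 2^{+1}-rank-connected but not prime, then there exists X ⊆ A−{v} with |X| = 2 and ρ_{G∖v}(X) ≤ 1. -/
open Finset

variable {V : Type} [Fintype V] [DecidableEq V]

open scoped Classical

/-- The rank over GF(2) of the `X × Y` submatrix of the adjacency matrix of `G`. -/
noncomputable def cutRankOn (G : SimpleGraph V) (X Y : Finset V) : ℕ :=
  (Matrix.of (fun (i : ↥X) (j : ↥Y) => if G.Adj i.1 j.1 then (1 : ZMod 2) else 0)).rank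

/-- The cut-rank of `X` in the graph `G` restricted to the vertex set `S`:
the rank over GF(2) of the `X × (S \ X)` submatrix of the adjacency matrix. -/
noncomputable def cutRank (G : SimpleGraph V) (S X : Finset V) : ℕ :=
  cutRankOn G X (S \ X)

/-- `A` gives a split of the graph `G` restricted to the vertex set `S`. -/
def IsSplit (G : SimpleGraph V) (S A : Finset V) : Prop :=
  A ⊆ S ∧ cutRank G S A ≤ 1 ∧ 2 ≤ A.card ∧ 2 ≤ (S \ A).card

/-- The graph `G` restricted to the vertex set `S` is prime: connected and with no split. -/
def IsPrime (G : SimpleGraph V) (S : Finset V) : Prop :=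
  (G.induce (↑S : Set V)).Connected ∧ ∀ A, ¬ IsSplit G S A

/-- `G` restricted to `S` is `k⁺ˡ`-rank-connected. -/
def RankConn (G : SimpleGraph V) (S : Finset V) (k l : ℤ) : Prop :=
  ∀ X ⊆ S, (cutRank G S X : ℤ) < k →
    min (X.card : ℤ) (((S \ X).card : ℤ)) < k + l

/-- `G` restricted to `S` is `k`-rank-connected. -/
def RankConnAll (G : SimpleGraph V) (S : Finset V) (k : ℤ) : Prop :=
  ∀ m : ℤ, m ≤ k → RankConn G S m 0

def SideA (G : SimpleGraph V) (v w x : V) : Prop := G.Adj v x ∧ ¬ G.Adj w x ∧ x ≠ w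
def SideB (G : SimpleGraph V) (v w x : V) : Prop := G.Adj w x ∧ ¬ G.Adj v x ∧ x ≠ v
def SideC (G : SimpleGraph V) (v w x : V) : Prop := G.Adj v x ∧ G.Adj w x

/-- `x` and `y` lie in different ones among the three sets
`N(v)−N(w)−{w}`, `N(w)−N(v)−{v}`, `N(v)∩N(w)`. -/
def PivotToggle (G : SimpleGraph V) (v w x y : V) : Prop :=
  (SideA G v w x ∧ SideB G v w y) ∨ (SideB G v w x ∧ SideA G v w y) ∨
  (SideA G v w x ∧ SideC G v w y) ∨ (SideC G v w x ∧ SideA G v w y) ∨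
  (SideB G v w x ∧ SideC G v w y) ∨ (SideC G v w x ∧ SideB G v w y)

set_option linter.unusedSectionVars false in
lemma pivotToggle_symm {G : SimpleGraph V} {v w x y : V}
    (h : PivotToggle G v w x y) : PivotToggle G v w y x := by
  unfold PivotToggle at h ⊢; tauto

/-- The graph `G ∧ vw` obtained by pivoting the edge `vw`: toggle adjacency across the
three sets and swap the labels of `v` and `w`. -/
def pivot (G : SimpleGraph V) (v w : V) : SimpleGraph V where
  Adj a b := a ≠ b ∧
    Xor' (G.Adj (Equiv.swap v w a) (Equiv.swap v w b))
         (PivotToggle G v w (Equiv.swap v w a) (Equiv.swap v w b))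
  symm := by
    constructor
    intro a b h
    obtain ⟨hne, hx⟩ := h
    refine ⟨hne.symm, ?_⟩
    have hA : G.Adj (Equiv.swap v w b) (Equiv.swap v w a) ↔
        G.Adj (Equiv.swap v w a) (Equiv.swap v w b) := SimpleGraph.adj_comm _ _ _
    have hT : PivotToggle G v w (Equiv.swap v w b) (Equiv.swap v w a) ↔
        PivotToggle G v w (Equiv.swap v w a) (Equiv.swap v w b) :=
      ⟨pivotToggle_symm, pivotToggle_symm⟩
    rw [hA, hT]
    exact hx
  loopless := by constructor; intro a h; exact h.1 rfl

/-- One pivot step along an edge. -/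
def PivotStep (G H : SimpleGraph V) : Prop := ∃ v w, G.Adj v w ∧ H = pivot G v w

/-- Pivot-equivalence: a sequence of pivots. -/
def PivotEquiv : SimpleGraph V → SimpleGraph V → Prop := Relation.ReflTransGen PivotStep

/-- `A` is a fully closed set of `G` restricted to `S`. -/
def FullyClosed (G : SimpleGraph V) (S A : Finset V) : Prop :=
  A ⊆ S ∧ cutRank G S A = 2 ∧ 2 < A.card ∧
    ∀ u ∈ S, u ∉ A → cutRank G S A < cutRank G S (insert u A)

/-- `{a,b,c}` is a triplet of `G` (on vertex set `univ`). -/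
def Triplet (G : SimpleGraph V) (a b c : V) : Prop :=
  cutRank G Finset.univ {a, b, c} = 2 ∧
  ∀ x ∈ ({a, b, c} : Finset V),
    cutRank G (Finset.univ \ {x}) (({a, b, c} : Finset V) \ {x}) = 2

/-- `B` is a `k`-branched set of `G` restricted to `S`. -/
inductive KBranched (G : SimpleGraph V) (S : Finset V) (k : ℕ) : Finset V → Prop
  | single (v : V) (hv : v ∈ S) (h : cutRank G S {v} ≤ k) : KBranched G S k {v}
  | split (B B' : Finset V) (hB : B ⊆ S) (h : cutRank G S B ≤ k)
      (h1 : B' ⊆ B) (h2 : B'.Nonempty) (h3 : B' ≠ B)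
      (hb1 : KBranched G S k B') (hb2 : KBranched G S k (B \ B')) : KBranched G S k B

/-- The rank-width of `G` restricted to `S`: the least `k` such that `S` is `k`-branched
(equivalently, the minimum width of a rank-decomposition). -/
noncomputable def rankWidth (G : SimpleGraph V) (S : Finset V) : ℕ :=
  sInf {k | S = ∅ ∨ KBranched G S k S}

/-- `A` is a titanic set of `G` restricted to `S`. -/
def Titanic (G : SimpleGraph V) (S A : Finset V) : Prop :=
  ∀ A1 A2 A3 : Finset V, A1 ∪ A2 ∪ A3 = A →
    Disjoint A1 A2 → Disjoint A1 A3 → Disjoint A2 A3 →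
    cutRank G S A ≤ cutRank G S A1 ∨ cutRank G S A ≤ cutRank G S A2 ∨
      cutRank G S A ≤ cutRank G S A3

set_option linter.unusedSectionVars false

/-- row vector of `x` over columns `Y`. -/
noncomputable def grow (G : SimpleGraph V) (Y : Finset V) (x : V) : (↥Y → ZMod 2) :=
  fun j => if G.Adj x j.1 then 1 else 0

lemma cutRankOn_eq (G : SimpleGraph V) (X Y : Finset V) :
    cutRankOn G X Y
      = Module.finrank (ZMod 2) (Submodule.span (ZMod 2) (grow G Y '' ↑X)) := by
  have h0 : grow G Y '' ↑X = Set.range (fun i : ↥X => grow G Y i.1) := by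
    rw [show (fun i : ↥X => grow G Y i.1) = (grow G Y) ∘ (Subtype.val) from rfl,
      Set.range_comp, Subtype.range_coe_subtype]
    congr 1
  rw [h0]
  exact Matrix.rank_eq_finrank_span_row _

noncomputable def projL (Y' Y : Finset V) (h : Y' ⊆ Y) :
    (↥Y → ZMod 2) →ₗ[ZMod 2] (↥Y' → ZMod 2) where
  toFun f := fun j => f ⟨j.1, h j.2⟩
  map_add' _ _ := rfl
  map_smul' _ _ := rfl

lemma map_projL_span (G : SimpleGraph V) (X : Finset V) {Y' Y : Finset V} (h : Y' ⊆ Y) :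
    (Submodule.span (ZMod 2) (grow G Y '' ↑X)).map (projL Y' Y h)
      = Submodule.span (ZMod 2) (grow G Y' '' ↑X) := by
  rw [Submodule.map_span]
  congr 1
  rw [← Set.image_comp]
  congr 1

lemma cutRankOn_mono_right (G : SimpleGraph V) (X : Finset V) {Y' Y : Finset V} (h : Y' ⊆ Y) :
    cutRankOn G X Y' ≤ cutRankOn G X Y := by
  rw [cutRankOn_eq, cutRankOn_eq, ← map_projL_span G X h]
  exact Submodule.finrank_map_le _ _

lemma finrank_proj_drop (G : SimpleGraph V) (X : Finset V) {Y' Y : Finset V} (h : Y' ⊆ Y)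
    {z : ↥Y → ZMod 2} (hz : z ∈ Submodule.span (ZMod 2) (grow G Y '' ↑X)) (hz0 : z ≠ 0)
    (hzp : projL Y' Y h z = 0) :
    cutRankOn G X Y' + 1 ≤ cutRankOn G X Y := by
  rw [cutRankOn_eq, cutRankOn_eq, ← map_projL_span G X h]
  set p := Submodule.span (ZMod 2) (grow G Y '' ↑X) with hp
  set ψ := (projL Y' Y h).comp p.subtype with hψ
  have hrange : LinearMap.range ψ = p.map (projL Y' Y h) := by
    rw [hψ, LinearMap.range_comp, Submodule.range_subtype]
  have hrn := LinearMap.finrank_range_add_finrank_ker ψ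
  have hker : 0 < Module.finrank (ZMod 2) (LinearMap.ker ψ) := by
    have hmem : (⟨z, hz⟩ : p) ∈ LinearMap.ker ψ := by
      simpa [hψ] using hzp
    have hnt : Nontrivial (LinearMap.ker ψ) := by
      refine ⟨⟨⟨⟨z, hz⟩, hmem⟩, 0, ?_⟩⟩
      simp only [ne_eq, Submodule.mk_eq_zero, Submodule.mk_eq_zero]
      exact hz0
    exact Module.finrank_pos
  rw [← hrange]
  omega

lemma cutRankOn_le_card_right (G : SimpleGraph V) (X Y : Finset V) :
    cutRankOn G X Y ≤ Y.card := by
  rw [cutRankOn_eq]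
  refine (Submodule.finrank_le _).trans ?_
  rw [Module.finrank_pi]
  exact le_of_eq (Fintype.card_coe Y)

lemma cutRankOn_comm (G : SimpleGraph V) (X Y : Finset V) :
    cutRankOn G X Y = cutRankOn G Y X := by
  rw [cutRankOn, cutRankOn,
    ← Matrix.rank_transpose (Matrix.of (fun (i : ↥X) (j : ↥Y) =>
      if G.Adj i.1 j.1 then (1 : ZMod 2) else 0))]
  congr 1
  ext j i
  simp only [Matrix.transpose_apply, Matrix.of_apply]
  exact if_congr (G.adj_comm _ _) rfl rfl

/-- rows `x` and `y` are "dependent" over columns `C`, stated combinatorially. -/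
def DepOn (G : SimpleGraph V) (x y : V) (C : Finset V) : Prop :=
  (∀ j ∈ C, ¬ G.Adj x j) ∨ (∀ j ∈ C, ¬ G.Adj y j) ∨ (∀ j ∈ C, (G.Adj x j ↔ G.Adj y j))

lemma depOn_symm {G : SimpleGraph V} {x y : V} {C : Finset V} (h : DepOn G x y C) :
    DepOn G y x C := by
  rcases h with h | h | h
  · exact Or.inr (Or.inl h)
  · exact Or.inl h
  · exact Or.inr (Or.inr fun j hj => (h j hj).symm)

lemma depOn_mono {G : SimpleGraph V} {x y : V} {C C' : Finset V} (hsub : C' ⊆ C)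
    (h : DepOn G x y C) : DepOn G y x C' := by
  rcases h with h | h | h
  · exact Or.inr (Or.inl fun j hj => h j (hsub hj))
  · exact Or.inl fun j hj => h j (hsub hj)
  · exact Or.inr (Or.inr fun j hj => (h j (hsub hj)).symm)

lemma grow_eq_zero {G : SimpleGraph V} {C : Finset V} {x : V}
    (h : ∀ j ∈ C, ¬ G.Adj x j) : grow G C x = 0 := by
  funext j
  exact if_neg (h j.1 j.2)

lemma grow_eq_grow {G : SimpleGraph V} {C : Finset V} {x y : V}
    (h : ∀ j ∈ C, (G.Adj x j ↔ G.Adj y j)) : grow G C x = grow G C y := by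
  funext j
  exact if_congr (h j.1 j.2) rfl rfl

lemma image_pair_grow (G : SimpleGraph V) (C : Finset V) (x y : V) :
    grow G C '' ↑({x, y} : Finset V) = {grow G C x, grow G C y} := by
  rw [coe_insert, coe_singleton, Set.image_pair]

lemma finrank_span_single_le {M : Type} [AddCommGroup M] [Module (ZMod 2) M] (w : M) :
    Module.finrank (ZMod 2) (Submodule.span (ZMod 2) ({w} : Set M)) ≤ 1 := by
  have := finrank_span_le_card (R := ZMod 2) ({w} : Set M)
  simpa using this

lemma cutRankOn_pair_le_one {G : SimpleGraph V} {x y : V} {C : Finset V}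
    (h : DepOn G x y C) : cutRankOn G {x, y} C ≤ 1 := by
  rw [cutRankOn_eq, image_pair_grow]
  rcases h with h | h | h
  · rw [grow_eq_zero h]
    have h2 : ({(0 : ↥C → ZMod 2), grow G C y} : Set _) = insert 0 {grow G C y} := rfl
    rw [h2, Submodule.span_insert_zero]
    exact finrank_span_single_le _
  · rw [grow_eq_zero h, Set.pair_comm]
    have h2 : ({(0 : ↥C → ZMod 2), grow G C x} : Set _) = insert 0 {grow G C x} := rfl
    rw [h2, Submodule.span_insert_zero]
    exact finrank_span_single_le _
  · rw [grow_eq_grow h, Set.pair_eq_singleton]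
    exact finrank_span_single_le _

lemma depOn_of_cutRankOn_pair {G : SimpleGraph V} {x y : V} {C : Finset V}
    (h : cutRankOn G {x, y} C ≤ 1) : DepOn G x y C := by
  by_contra hcon
  rw [DepOn] at hcon
  push_neg at hcon
  obtain ⟨⟨j1, hj1, ha1⟩, ⟨j2, hj2, ha2⟩, ⟨j3, hj3, ha3⟩⟩ := hcon
  let gx := grow G C x
  let gy := grow G C y
  have hgx : gx = grow G C x := rfl
  have hgy : gy = grow G C y := rfl
  have hx0 : gx ≠ 0 := by
    intro h0
    have := congrFun h0 ⟨j1, hj1⟩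
    rw [hgx] at this
    simp only [grow, if_pos ha1, Pi.zero_apply] at this
    exact one_ne_zero this
  have hy0 : gy ≠ 0 := by
    intro h0
    have := congrFun h0 ⟨j2, hj2⟩
    rw [hgy] at this
    simp only [grow, if_pos ha2, Pi.zero_apply] at this
    exact one_ne_zero this
  have hxyne : gx ≠ gy := by
    intro h0
    have := congrFun h0 ⟨j3, hj3⟩
    rw [hgx, hgy] at this
    simp only [grow] at this
    rcases ha3 with ⟨h1, h2⟩ | ⟨h1, h2⟩
    · rw [if_pos h1, if_neg h2] at this
      exact one_ne_zero this
    · rw [if_neg h1, if_pos h2] at this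
      exact one_ne_zero this.symm
  have hzmod : ∀ u : ZMod 2, u = 0 ∨ u = 1 := by decide
  have hli : LinearIndependent (ZMod 2) ![gx, gy] := by
    rw [LinearIndependent.pair_iff]
    intro s t hst
    rcases hzmod s with hs | hs <;> rcases hzmod t with ht | ht <;> subst hs <;> subst ht
    · exact ⟨rfl, rfl⟩
    · exfalso; apply hy0; simpa using hst
    · exfalso; apply hx0; simpa using hst
    · exfalso
      apply hxyne
      have h1 : gx = -gy := by
        have := eq_neg_of_add_eq_zero_left (by simpa using hst)
        exact this
      rw [h1, ← neg_one_smul (ZMod 2) gy]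
      have : (-1 : ZMod 2) = 1 := by decide
      rw [this, one_smul]
  have hcard := linearIndependent_iff_card_eq_finrank_span.mp hli
  rw [cutRankOn_eq, image_pair_grow] at h
  have hrange : Set.range ![gx, gy] = ({gx, gy} : Set _) := by
    rw [Matrix.range_cons, Matrix.range_cons_empty, Set.singleton_union]
  have hcard2 : Fintype.card (Fin 2)
      = Module.finrank (ZMod 2) (Submodule.span (ZMod 2) (Set.range ![gx, gy])) := hcard
  rw [hrange] at hcard2
  simp only [Fintype.card_fin] at hcard2
  rw [hgx, hgy] at hcard2
  omega

lemma cutRankOn_zero_rows {G : SimpleGraph V} {X Y : Finset V}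
    (h : ∀ i ∈ X, ∀ j ∈ Y, ¬ G.Adj i j) : cutRankOn G X Y = 0 := by
  rw [cutRankOn_eq]
  have himg : grow G Y '' ↑X ⊆ {(0 : ↥Y → ZMod 2)} := by
    rintro f ⟨i, hi, rfl⟩
    rw [Set.mem_singleton_iff]
    exact grow_eq_zero fun j hj => h i (by simpa using hi) j hj
  have hle : Submodule.span (ZMod 2) (grow G Y '' ↑X) ≤ ⊥ := by
    rw [← Submodule.span_zero_singleton (ZMod 2)]
    exact Submodule.span_mono himg
  rw [le_bot_iff.mp hle]
  exact finrank_bot _ _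

lemma cutRankOn_insert_le (G : SimpleGraph V) (x : V) (X Y : Finset V) :
    cutRankOn G (insert x X) Y ≤ cutRankOn G X Y + 1 := by
  rw [cutRankOn_eq, cutRankOn_eq, coe_insert, Set.image_insert_eq, Submodule.span_insert]
  have h1 := Submodule.finrank_sup_add_finrank_inf_eq
    ((ZMod 2) ∙ (grow G Y x))
    (Submodule.span (ZMod 2) (grow G Y '' ↑X))
  have h2 : Module.finrank (ZMod 2) ((ZMod 2) ∙ (grow G Y x)) ≤ 1 :=
    finrank_span_single_le (grow G Y x)
  omega

lemma cutRankOn_insert_le_of_mem {G : SimpleGraph V} {x : V} {X Y : Finset V}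
    (hx : grow G Y x ∈ Submodule.span (ZMod 2) (grow G Y '' ↑X)) :
    cutRankOn G (insert x X) Y ≤ cutRankOn G X Y := by
  rw [cutRankOn_eq, cutRankOn_eq, coe_insert, Set.image_insert_eq,
    Submodule.span_insert_eq_span hx]

section MainLemmas

variable {G : SimpleGraph V}

lemma cutRank_def (G : SimpleGraph V) (S X : Finset V) :
    cutRank G S X = cutRankOn G X (S \ X) := rfl

lemma prime_pair (hcard : 4 ≤ Fintype.card V) (hG : IsPrime G Finset.univ) {x y : V}
    (hxy : x ≠ y) (h : DepOn G x y (Finset.univ \ {x, y})) : False := by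
  apply hG.2 {x, y}
  have hc2 : ({x, y} : Finset V).card = 2 := by
    rw [card_insert_of_notMem (by simp [hxy]), card_singleton]
  refine ⟨subset_univ _, ?_, le_of_eq hc2.symm, ?_⟩
  · exact cutRankOn_pair_le_one h
  · rw [card_sdiff_of_subset (subset_univ _), card_univ, hc2]
    omega

lemma fc_rank {A : Finset V} (hA : FullyClosed G Finset.univ A) :
    cutRankOn G A (Finset.univ \ A) = 2 := by
  obtain ⟨-, hr2, -, -⟩ := hA
  exact hr2

lemma fc_card {A : Finset V} (hA : FullyClosed G Finset.univ A) : 2 < A.card := by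
  obtain ⟨-, -, hc, -⟩ := hA
  exact hc

lemma fc_insert {A : Finset V} (hA : FullyClosed G Finset.univ A) {u : V} (hu : u ∉ A) :
    3 ≤ cutRankOn G (insert u A) ((Finset.univ \ A).erase u) := by
  obtain ⟨-, hr2, -, hins⟩ := hA
  have h := hins u (mem_univ u) hu
  rw [hr2] at h
  have hset : Finset.univ \ insert u A = (Finset.univ \ A).erase u := by
    ext z
    simp only [mem_sdiff, mem_univ, true_and, mem_insert, mem_erase]
    tauto
  have h2 : cutRank G Finset.univ (insert u A)
      = cutRankOn G (insert u A) ((Finset.univ \ A).erase u) := by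
    rw [cutRank_def, hset]
  omega

lemma fc_B_card (hcard : 4 ≤ Fintype.card V) {A : Finset V}
    (hA : FullyClosed G Finset.univ A) : 4 ≤ (Finset.univ \ A).card := by
  have hA2 : cutRankOn G A (Finset.univ \ A) = 2 := fc_rank hA

  have hne : (Finset.univ \ A).Nonempty := by
    rw [← card_pos]
    by_contra hc
    have h0 : (Finset.univ \ A).card = 0 := by omega
    have := cutRankOn_le_card_right G A (Finset.univ \ A)
    omega
  obtain ⟨u, hu⟩ := hne
  have hkey := fc_insert hA (mem_sdiff.mp hu).2
  have hle := cutRankOn_le_card_right G (insert u A) ((Finset.univ \ A).erase u)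
  have hcd := card_erase_of_mem hu
  omega

lemma onein (hcard : 4 ≤ Fintype.card V) (hG : IsPrime G Finset.univ) {A : Finset V}
    (hA : FullyClosed G Finset.univ A) {v x y : V} (hv : v ∈ A) (hx : x ∉ A) (hy : y ∈ A)
    (hyv : y ≠ v) (hdep : DepOn G x y (Finset.univ \ {v, x, y})) : False := by
  have hxB : x ∈ Finset.univ \ A := mem_sdiff.mpr ⟨mem_univ x, hx⟩
  have hkey := fc_insert hA hx
  have hA2 : cutRankOn G A (Finset.univ \ A) = 2 := fc_rank hA
  have hsub : (Finset.univ \ A).erase x ⊆ Finset.univ \ ({v, x, y} : Finset V) := by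
    intro z hz
    rw [mem_erase, mem_sdiff] at hz
    rw [mem_sdiff, mem_insert, mem_insert, mem_singleton]
    refine ⟨mem_univ z, ?_⟩
    push_neg
    exact ⟨fun h => hz.2.2 (h ▸ hv), hz.1, fun h => hz.2.2 (h ▸ hy)⟩
  have hErs : (Finset.univ \ A).erase x ⊆ Finset.univ \ A := erase_subset _ _
  have hmono := cutRankOn_mono_right G A hErs
  rcases hdep with h1 | h2 | h3
  · have hg : grow G ((Finset.univ \ A).erase x) x = 0 :=
      grow_eq_zero fun j hj => h1 j (hsub hj)
    have hle := cutRankOn_insert_le_of_mem (X := A)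
      (by rw [hg]; exact Submodule.zero_mem _)
    omega
  · by_cases hyx : G.Adj y x
    · have hzmem : grow G (Finset.univ \ A) y
          ∈ Submodule.span (ZMod 2) (grow G (Finset.univ \ A) '' ↑A) :=
        Submodule.subset_span ⟨y, by simpa using hy, rfl⟩
      have hz0 : grow G (Finset.univ \ A) y ≠ 0 := by
        intro h0
        have := congrFun h0 ⟨x, hxB⟩
        simp only [grow, Pi.zero_apply] at this
        rw [if_pos hyx] at this
        exact one_ne_zero this
      have hzp : projL _ _ hErs (grow G (Finset.univ \ A) y) = 0 := by
        funext j
        show (if G.Adj y j.1 then (1 : ZMod 2) else 0) = 0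
        exact if_neg (h2 j.1 (hsub j.2))
      have hdrop := finrank_proj_drop G A hErs hzmem hz0 hzp
      have hins := cutRankOn_insert_le G x A ((Finset.univ \ A).erase x)
      omega
    · apply prime_pair hcard hG hyv (x := y) (y := v)
      left
      intro j hj
      rw [mem_sdiff, mem_insert, mem_singleton] at hj
      push_neg at hj
      by_cases hjx : j = x
      · rw [hjx]; exact hyx
      · apply h2 j
        rw [mem_sdiff, mem_insert, mem_insert, mem_singleton]
        push_neg
        exact ⟨mem_univ j, hj.2.2, hjx, hj.2.1⟩
  · have hg : grow G ((Finset.univ \ A).erase x) x = grow G ((Finset.univ \ A).erase x) y :=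
      grow_eq_grow fun j hj => h3 j (hsub hj)
    have hymem : grow G ((Finset.univ \ A).erase x) y
        ∈ Submodule.span (ZMod 2) (grow G ((Finset.univ \ A).erase x) '' ↑A) :=
      Submodule.subset_span ⟨y, by simpa using hy, rfl⟩
    have hle := cutRankOn_insert_le_of_mem (by rw [hg]; exact hymem)
    omega

lemma bothout (hcard : 4 ≤ Fintype.card V) (hG : IsPrime G Finset.univ) {A : Finset V}
    (hA : FullyClosed G Finset.univ A) {v x y : V} (hv : v ∈ A) (hx : x ∉ A) (hy : y ∉ A)
    (hxy : x ≠ y) (hxv : x ≠ v) (hyv : y ≠ v)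
    (hdep : DepOn G x y (Finset.univ \ {v, x, y})) :
    cutRankOn G (Finset.univ \ A) (A.erase v) ≤ 1 := by
  have hxB : x ∈ Finset.univ \ A := mem_sdiff.mpr ⟨mem_univ x, hx⟩
  have hyB : y ∈ Finset.univ \ A := mem_sdiff.mpr ⟨mem_univ y, hy⟩
  have hBA : cutRankOn G (Finset.univ \ A) A = 2 := by
    rw [cutRankOn_comm]; exact fc_rank hA
  have hsubA : A.erase v ⊆ Finset.univ \ ({v, x, y} : Finset V) := by
    intro z hz
    rw [mem_erase] at hz
    rw [mem_sdiff, mem_insert, mem_insert, mem_singleton]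
    refine ⟨mem_univ z, ?_⟩
    push_neg
    exact ⟨hz.1, fun h => hx (h ▸ hz.2), fun h => hy (h ▸ hz.2)⟩
  have hAE : A.erase v ⊆ A := erase_subset _ _
  have honezero : (1 : ZMod 2) + 1 = 0 := by decide
  rcases hdep with h1 | h2 | h3
  · -- row x is zero off {v,x,y}
    by_cases hxv' : G.Adj x v
    · have hzmem : grow G A x
          ∈ Submodule.span (ZMod 2) (grow G A '' ↑(Finset.univ \ A)) :=
        Submodule.subset_span ⟨x, by simpa using hxB, rfl⟩
      have hz0 : grow G A x ≠ 0 := by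
        intro h0
        have := congrFun h0 ⟨v, hv⟩
        simp only [grow, Pi.zero_apply] at this
        rw [if_pos hxv'] at this
        exact one_ne_zero this
      have hzp : projL _ _ hAE (grow G A x) = 0 := by
        funext j
        show (if G.Adj x j.1 then (1 : ZMod 2) else 0) = 0
        exact if_neg (h1 j.1 (hsubA j.2))
      have hdrop := finrank_proj_drop G (Finset.univ \ A) hAE hzmem hz0 hzp
      omega
    · refine (prime_pair hcard hG hxy (x := x) (y := y) ?_).elim
      left
      intro j hj
      rw [mem_sdiff, mem_insert, mem_singleton] at hj
      push_neg at hj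
      by_cases hjv : j = v
      · rw [hjv]; exact hxv'
      · apply h1 j
        rw [mem_sdiff, mem_insert, mem_insert, mem_singleton]
        push_neg
        exact ⟨mem_univ j, hjv, hj.2.1, hj.2.2⟩
  · -- row y is zero off {v,x,y}
    by_cases hyv' : G.Adj y v
    · have hzmem : grow G A y
          ∈ Submodule.span (ZMod 2) (grow G A '' ↑(Finset.univ \ A)) :=
        Submodule.subset_span ⟨y, by simpa using hyB, rfl⟩
      have hz0 : grow G A y ≠ 0 := by
        intro h0
        have := congrFun h0 ⟨v, hv⟩
        simp only [grow, Pi.zero_apply] at this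
        rw [if_pos hyv'] at this
        exact one_ne_zero this
      have hzp : projL _ _ hAE (grow G A y) = 0 := by
        funext j
        show (if G.Adj y j.1 then (1 : ZMod 2) else 0) = 0
        exact if_neg (h2 j.1 (hsubA j.2))
      have hdrop := finrank_proj_drop G (Finset.univ \ A) hAE hzmem hz0 hzp
      omega
    · refine (prime_pair hcard hG hxy (x := x) (y := y) ?_).elim
      right; left
      intro j hj
      rw [mem_sdiff, mem_insert, mem_singleton] at hj
      push_neg at hj
      by_cases hjv : j = v
      · rw [hjv]; exact hyv'
      · apply h2 j
        rw [mem_sdiff, mem_insert, mem_insert, mem_singleton]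
        push_neg
        exact ⟨mem_univ j, hjv, hj.2.1, hj.2.2⟩
  · -- rows x and y agree off {v,x,y}
    by_cases hδ : G.Adj x v ↔ G.Adj y v
    · refine (prime_pair hcard hG hxy (x := x) (y := y) ?_).elim
      right; right
      intro j hj
      rw [mem_sdiff, mem_insert, mem_singleton] at hj
      push_neg at hj
      by_cases hjv : j = v
      · rw [hjv]; exact hδ
      · apply h3 j
        rw [mem_sdiff, mem_insert, mem_insert, mem_singleton]
        push_neg
        exact ⟨mem_univ j, hjv, hj.2.1, hj.2.2⟩
    · have hzmem : grow G A x + grow G A y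
          ∈ Submodule.span (ZMod 2) (grow G A '' ↑(Finset.univ \ A)) :=
        Submodule.add_mem _ (Submodule.subset_span ⟨x, by simpa using hxB, rfl⟩)
          (Submodule.subset_span ⟨y, by simpa using hyB, rfl⟩)
      have hz0 : grow G A x + grow G A y ≠ 0 := by
        intro h0
        have := congrFun h0 ⟨v, hv⟩
        simp only [grow, Pi.add_apply, Pi.zero_apply] at this
        by_cases hax : G.Adj x v <;> by_cases hay : G.Adj y v
        · exact hδ (iff_of_true hax hay)
        · rw [if_pos hax, if_neg hay, add_zero] at this
          exact one_ne_zero this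
        · rw [if_neg hax, if_pos hay, zero_add] at this
          exact one_ne_zero this
        · exact hδ (iff_of_false hax hay)
      have hzp : projL _ _ hAE (grow G A x + grow G A y) = 0 := by
        funext j
        show (if G.Adj x j.1 then (1 : ZMod 2) else 0)
            + (if G.Adj y j.1 then (1 : ZMod 2) else 0) = 0
        have hjj := h3 j.1 (hsubA j.2)
        by_cases hax : G.Adj x j.1
        · rw [if_pos hax, if_pos (hjj.mp hax)]
          exact honezero
        · rw [if_neg hax, if_neg (fun h => hax (hjj.mpr h)), add_zero]
      have hdrop := finrank_proj_drop G (Finset.univ \ A) hAE hzmem hz0 hzp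
      omega

end MainLemmas


section FinalLemmas

variable {G : SimpleGraph V}

lemma isolated_case (hcard : 4 ≤ Fintype.card V) (hG : IsPrime G Finset.univ) {A : Finset V}
    (hA : FullyClosed G Finset.univ A) {v : V} (hv : v ∈ A) {x : V} (hxv : x ≠ v)
    (hiso : ∀ z, z ≠ v → z ≠ x → ¬ G.Adj x z) :
    ∃ X ⊆ A \ {v}, X.card = 2 ∧ cutRank G (Finset.univ \ {v}) X ≤ 1 := by
  have hA2 : cutRankOn G A (Finset.univ \ A) = 2 := fc_rank hA
  have hxA : x ∈ A := by
    by_contra hxA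
    have hkey := fc_insert hA hxA
    have hErs : (Finset.univ \ A).erase x ⊆ Finset.univ \ A := erase_subset _ _
    have hmono := cutRankOn_mono_right G A hErs
    have hg : grow G ((Finset.univ \ A).erase x) x = 0 := by
      apply grow_eq_zero
      intro j hj
      rw [mem_erase, mem_sdiff] at hj
      exact hiso j (fun h => hj.2.2 (h ▸ hv)) hj.1
    have hle := cutRankOn_insert_le_of_mem (X := A)
      (by rw [hg]; exact Submodule.zero_mem _)
    omega
  have hxe : x ∈ A.erase v := mem_erase.mpr ⟨hxv, hxA⟩
  have hne : ((A.erase v).erase x).Nonempty := by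
    rw [← card_pos, card_erase_of_mem hxe, card_erase_of_mem hv]
    have := fc_card hA
    omega
  obtain ⟨y, hy⟩ := hne
  rw [mem_erase, mem_erase] at hy
  refine ⟨{x, y}, ?_, ?_, ?_⟩
  · intro z hz
    rw [mem_insert, mem_singleton] at hz
    rw [mem_sdiff, mem_singleton]
    rcases hz with rfl | rfl
    · exact ⟨hxA, hxv⟩
    · exact ⟨hy.2.2, hy.2.1⟩
  · rw [card_insert_of_notMem (by simp [Ne.symm hy.1]), card_singleton]
  · apply cutRankOn_pair_le_one
    left
    intro j hj
    rw [mem_sdiff, mem_sdiff, mem_singleton, mem_insert, mem_singleton] at hj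
    push_neg at hj
    exact hiso j hj.1.2 hj.2.1

lemma split_case (hcard : 4 ≤ Fintype.card V) (hG : IsPrime G Finset.univ) {A : Finset V}
    (hA : FullyClosed G Finset.univ A) {v : V} (hv : v ∈ A)
    (hconn : RankConn G (Finset.univ \ {v}) 2 1)
    {P : Finset V} (hP : IsSplit G (Finset.univ \ {v}) P) :
    ∃ X ⊆ A \ {v}, X.card = 2 ∧ cutRank G (Finset.univ \ {v}) X ≤ 1 := by
  obtain ⟨hPS, hPrk, hP2, hP2'⟩ := hP
  have hm := hconn P hPS (by
    have : cutRank G (Finset.univ \ {v}) P < 2 := by omega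
    exact_mod_cast this)
  rw [min_lt_iff] at hm
  have hQ : ∃ Q, Q ⊆ Finset.univ \ {v} ∧ Q.card = 2
      ∧ cutRank G (Finset.univ \ {v}) Q ≤ 1 := by
    rcases hm with hm | hm
    · have hc3 : P.card < 3 := by exact_mod_cast (by linarith : (P.card : ℤ) < 3)
      exact ⟨P, hPS, by omega, hPrk⟩
    · have hc3 : ((Finset.univ \ {v}) \ P).card < 3 := by
        exact_mod_cast (by linarith : ((((Finset.univ \ {v}) \ P).card : ℤ)) < 3)
      refine ⟨(Finset.univ \ {v}) \ P, sdiff_subset, by omega, ?_⟩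
      have e0 : (Finset.univ \ {v}) \ ((Finset.univ \ {v}) \ P) = P :=
        Finset.sdiff_sdiff_eq_self hPS
      have e1 : cutRank G (Finset.univ \ {v}) ((Finset.univ \ {v}) \ P)
          = cutRankOn G ((Finset.univ \ {v}) \ P) P := by
        rw [cutRank_def, e0]
      rw [e1, cutRankOn_comm]
      exact hPrk
  obtain ⟨Q, hQS, hQ2, hQrk⟩ := hQ
  obtain ⟨x, y, hxy, rfl⟩ := card_eq_two.mp hQ2
  have hxv : x ≠ v := by
    have := hQS (mem_insert_self x {y})
    rw [mem_sdiff, mem_singleton] at this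
    exact this.2
  have hyv : y ≠ v := by
    have := hQS (mem_insert_of_mem (mem_singleton_self y))
    rw [mem_sdiff, mem_singleton] at this
    exact this.2
  have hCset : (Finset.univ \ {v}) \ ({x, y} : Finset V)
      = Finset.univ \ ({v, x, y} : Finset V) := by
    ext z
    simp only [mem_sdiff, mem_univ, true_and, mem_insert, mem_singleton]
    tauto
  have hdep : DepOn G x y (Finset.univ \ ({v, x, y} : Finset V)) := by
    apply depOn_of_cutRankOn_pair
    rw [← hCset]
    exact hQrk
  by_cases hxA : x ∈ A <;> by_cases hyA : y ∈ A
  · refine ⟨{x, y}, ?_, hQ2, hQrk⟩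
    intro z hz
    rw [mem_insert, mem_singleton] at hz
    rw [mem_sdiff, mem_singleton]
    rcases hz with rfl | rfl
    · exact ⟨hxA, hxv⟩
    · exact ⟨hyA, hyv⟩
  · exact (onein hcard hG hA hv hyA hxA hxv (by
      have hset' : Finset.univ \ ({v, y, x} : Finset V)
          = Finset.univ \ ({v, x, y} : Finset V) := by
        ext z
        simp only [mem_sdiff, mem_univ, true_and, mem_insert, mem_singleton]
        tauto
      rw [hset']
      exact depOn_symm hdep)).elim
  · exact (onein hcard hG hA hv hxA hyA hyv hdep).elim
  · -- both outside A
    have hb := bothout hcard hG hA hv hxA hyA hxy hxv hyv hdep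
    have herase : A.erase v = A \ {v} := Finset.erase_eq A v
    have hset2 : (Finset.univ \ {v}) \ (A \ {v}) = Finset.univ \ A := by
      ext z
      simp only [mem_sdiff, mem_univ, true_and, mem_singleton]
      constructor
      · rintro ⟨hz1, hz2⟩
        intro hzA
        exact hz2 ⟨hzA, hz1⟩
      · intro hzA
        exact ⟨fun h => hzA (h ▸ hv), fun h => hzA h.1⟩
    have hrk : cutRank G (Finset.univ \ {v}) (A \ {v}) ≤ 1 := by
      rw [cutRank_def, hset2, cutRankOn_comm, ← herase]
      exact hb
    have hsubS : A \ {v} ⊆ Finset.univ \ {v} := by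
      intro z hz
      rw [mem_sdiff] at hz ⊢
      exact ⟨mem_univ z, hz.2⟩
    have hm2 := hconn (A \ {v}) hsubS (by
      have : cutRank G (Finset.univ \ {v}) (A \ {v}) < 2 := by omega
      exact_mod_cast this)
    rw [min_lt_iff] at hm2
    have hBc := fc_B_card hcard hA
    have hAc := fc_card hA
    have hAvc : (A \ {v}).card = A.card - 1 := by
      rw [card_sdiff_of_subset (by simp [hv]), card_singleton]
    have hAv2 : (A \ {v}).card = 2 := by
      rcases hm2 with hm2 | hm2
      · have : (A \ {v}).card < 3 := by exact_mod_cast (by linarith : (((A \ {v}).card : ℤ)) < 3)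
        omega
      · exfalso
        rw [hset2] at hm2
        have : (Finset.univ \ A).card < 3 := by
          exact_mod_cast (by linarith : (((Finset.univ \ A).card : ℤ)) < 3)
        omega
    exact ⟨A \ {v}, subset_rfl, hAv2, hrk⟩

end FinalLemmas


theorem fullyClosed_pick {G : SimpleGraph V} (hcard : 4 ≤ Fintype.card V)
    (hG : IsPrime G Finset.univ) {A : Finset V} (hA : FullyClosed G Finset.univ A)
    {v : V} (hv : v ∈ A) (hconn : RankConn G (Finset.univ \ {v}) 2 1)
    (hnp : ¬ IsPrime G (Finset.univ \ {v})) :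
    ∃ X ⊆ A \ {v}, X.card = 2 ∧ cutRank G (Finset.univ \ {v}) X ≤ 1 := by
  by_cases hsplit : ∃ P, IsSplit G (Finset.univ \ {v}) P
  · obtain ⟨P, hP⟩ := hsplit
    exact split_case hcard hG hA hv hconn hP
  · set S : Finset V := Finset.univ \ {v} with hSdef
    have hnc : ¬ (G.induce (↑S : Set V)).Connected :=
      fun hc => hnp ⟨hc, fun P hP => hsplit ⟨P, hP⟩⟩
    have hScard : 3 ≤ S.card := by
      rw [hSdef, card_sdiff_of_subset (subset_univ _), card_univ, card_singleton]
      omega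
    have hSne : S.Nonempty := by
      rw [← card_pos]
      omega
    obtain ⟨s0, hs0⟩ := hSne
    have hNE : Nonempty (↑S : Set V) :=
      ⟨⟨s0, by simpa using hs0⟩⟩
    have hpre0 : ¬ (G.induce (↑S : Set V)).Preconnected :=
      fun hp => hnc ⟨hp⟩
    have hpre : ¬ ∀ (u w : (↑S : Set V)),
        (G.induce (↑S : Set V)).Reachable u w := hpre0
    push_neg at hpre
    obtain ⟨a, b, hab⟩ := hpre
    set W : Finset V := S.filter
      (fun c => ∃ (hc : c ∈ (↑S : Set V)),
        (G.induce (↑S : Set V)).Reachable a ⟨c, hc⟩) with hWdef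
    have haW : a.1 ∈ W := by
      refine mem_filter.mpr ⟨by simpa using a.2, a.2, ?_⟩
      exact SimpleGraph.Reachable.refl a
    have hbS : b.1 ∈ S := by simpa using b.2
    have hbW : b.1 ∉ W := by
      intro hbW'
      obtain ⟨-, hc, hr⟩ := mem_filter.mp hbW'
      exact hab hr
    have hcross : ∀ c ∈ W, ∀ d ∈ S, d ∉ W → ¬ G.Adj c d := by
      intro c hc d hd hdW hadj
      obtain ⟨hcS, hcc, hr⟩ := mem_filter.mp hc
      apply hdW
      refine mem_filter.mpr ⟨hd, by simpa using hd,
        hr.trans (SimpleGraph.Adj.reachable ?_)⟩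
      exact hadj
    have hWsub : W ⊆ S := filter_subset _ _
    by_cases hsz : 2 ≤ W.card ∧ 2 ≤ (S \ W).card
    · exfalso
      apply hsplit
      refine ⟨W, hWsub, ?_, hsz.1, hsz.2⟩
      have h0 : cutRankOn G W (S \ W) = 0 := by
        apply cutRankOn_zero_rows
        intro i hi j hj
        rw [mem_sdiff] at hj
        exact hcross i hi j hj.1 hj.2
      have h1 : cutRank G S W = cutRankOn G W (S \ W) := cutRank_def G S W
      omega
    · have hone : W.card = 1 ∨ (S \ W).card = 1 := by
        have h1 : 1 ≤ W.card := card_pos.mpr ⟨a.1, haW⟩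
        have h2 : 1 ≤ (S \ W).card := card_pos.mpr ⟨b.1, mem_sdiff.mpr ⟨hbS, hbW⟩⟩
        rw [not_and_or] at hsz
        omega
      rcases hone with h1 | h1
      · obtain ⟨c, hc⟩ := card_eq_one.mp h1
        have hcW : c ∈ W := by rw [hc]; exact mem_singleton_self c
        have hcS : c ∈ S := hWsub hcW
        have hcv : c ≠ v := by
          rw [hSdef, mem_sdiff, mem_singleton] at hcS
          exact hcS.2
        apply isolated_case hcard hG hA hv hcv
        intro z hzv hzc
        have hzS : z ∈ S := by
          rw [hSdef, mem_sdiff, mem_singleton]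
          exact ⟨mem_univ z, hzv⟩
        have hzW : z ∉ W := by
          rw [hc, mem_singleton]
          exact hzc
        exact hcross c hcW z hzS hzW
      · obtain ⟨c, hc⟩ := card_eq_one.mp h1
        have hcSW : c ∈ S \ W := by rw [hc]; exact mem_singleton_self c
        have hcS : c ∈ S := (mem_sdiff.mp hcSW).1
        have hcW : c ∉ W := (mem_sdiff.mp hcSW).2
        have hcv : c ≠ v := by
          rw [hSdef, mem_sdiff, mem_singleton] at hcS
          exact hcS.2
        apply isolated_case hcard hG hA hv hcv
        intro z hzv hzc
        have hzS : z ∈ S := by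
          rw [hSdef, mem_sdiff, mem_singleton]
          exact ⟨mem_univ z, hzv⟩
        have hzW : z ∈ W := by
          by_contra hzW'
          have hmem : z ∈ S \ W := mem_sdiff.mpr ⟨hzS, hzW'⟩
          rw [hc, mem_singleton] at hmem
          exact hzc hmem
        intro hadj
        exact hcross z hzW c hcS hcW hadj.symm
end

section
/- Let G be a 3-rank-connected graph with at least 6 vertices. Then for every vertex v, G∖v or G/v is prime and 3^{+2}-rank-connected. -/
open Finset

variable {V : Type} [Fintype V] [DecidableEq V]

open scoped Classical

set_option linter.unusedSectionVars false

section Aux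

noncomputable def aM (G : SimpleGraph V) : V → V → ZMod 2 := fun x y => if G.Adj x y then 1 else 0

noncomputable def srank (f : V → V → ZMod 2) (A C : Finset V) : ℕ :=
  (Matrix.of (fun (i : ↥A) (j : ↥C) => f i.1 j.1)).rank

noncomputable def colSpan (f : V → V → ZMod 2) (A C : Finset V) :
    Submodule (ZMod 2) (↥A → ZMod 2) :=
  Submodule.span (ZMod 2) (Set.range (fun (j : ↥C) => (fun (i : ↥A) => f i.1 j.1)))

lemma srank_eq_finrank (f : V → V → ZMod 2) (A C : Finset V) :
    srank f A C = Module.finrank (ZMod 2) (colSpan f A C) := by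
  have h : LinearMap.range (Matrix.of (fun (i : ↥A) (j : ↥C) => f i.1 j.1)).mulVecLin
      = colSpan f A C := by
    rw [Matrix.range_mulVecLin]; rfl
  unfold srank Matrix.rank
  rw [h]

lemma srank_le_of_cols_mem (f : V → V → ZMod 2) (A C : Finset V)
    (W : Submodule (ZMod 2) (↥A → ZMod 2))
    (h : ∀ j : ↥C, (fun i : ↥A => f i.1 j.1) ∈ W) :
    srank f A C ≤ Module.finrank (ZMod 2) W := by
  rw [srank_eq_finrank]
  exact Submodule.finrank_mono (Submodule.span_le.mpr (Set.range_subset_iff.mpr h))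

lemma srank_transpose (f : V → V → ZMod 2) (A C : Finset V) :
    srank (fun x y => f y x) C A = srank f A C := by
  unfold srank
  rw [← Matrix.rank_transpose (Matrix.of (fun (i : ↥A) (j : ↥C) => f i.1 j.1))]
  rfl

lemma srank_symm {G : SimpleGraph V} (A C : Finset V) :
    srank (aM G) A C = srank (aM G) C A := by
  rw [← srank_transpose (aM G) C A]
  congr 1
  funext x y
  unfold aM
  simp [SimpleGraph.adj_comm]

-- finrank of sup ≤ sum
lemma finrank_sup_le {M : Type*} [AddCommGroup M] [Module (ZMod 2) M]
    (s t : Submodule (ZMod 2) M) [FiniteDimensional (ZMod 2) s] [FiniteDimensional (ZMod 2) t] :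
    Module.finrank (ZMod 2) ↥(s ⊔ t) ≤ Module.finrank (ZMod 2) s + Module.finrank (ZMod 2) t := by
  have := Submodule.finrank_sup_add_finrank_inf_eq s t
  omega

lemma finrank_span_singleton_le {M : Type*} [AddCommGroup M] [Module (ZMod 2) M]
    (z : M) : Module.finrank (ZMod 2) ↥(Submodule.span (ZMod 2) {z}) ≤ 1 := by
  have h := finrank_span_le_card (R := ZMod 2) ({z} : Set M)
  simpa using h

-- row monotonicity
lemma srank_rows_mono (f : V → V → ZMod 2) {A A' : Finset V} (hA : A ⊆ A') (C : Finset V) :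
    srank f A C ≤ srank f A' C := by
  rw [srank_eq_finrank, srank_eq_finrank]
  set π : (↥A' → ZMod 2) →ₗ[ZMod 2] (↥A → ZMod 2) :=
    LinearMap.funLeft (ZMod 2) (ZMod 2) (fun i => ⟨i.1, hA i.2⟩)
  have hmap : colSpan f A C = Submodule.map π (colSpan f A' C) := by
    unfold colSpan
    rw [Submodule.map_span, ← Set.range_comp]
    rfl
  rw [hmap]
  calc Module.finrank (ZMod 2) ↥(Submodule.map π (colSpan f A' C))
      ≤ Module.finrank (ZMod 2) ↥(colSpan f A' C) := Submodule.finrank_map_le π _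
    _ = _ := rfl

-- column monotonicity
lemma colSpan_mono (f : V → V → ZMod 2) (A : Finset V) {C C' : Finset V} (hC : C ⊆ C') :
    colSpan f A C ≤ colSpan f A C' := by
  unfold colSpan
  apply Submodule.span_le.mpr
  rintro x ⟨j, rfl⟩
  apply Submodule.subset_span
  exact ⟨⟨j.1, hC j.2⟩, rfl⟩

lemma srank_cols_mono (f : V → V → ZMod 2) (A : Finset V) {C C' : Finset V} (hC : C ⊆ C') :
    srank f A C ≤ srank f A C' := by
  rw [srank_eq_finrank, srank_eq_finrank]
  exact Submodule.finrank_mono (colSpan_mono f A hC)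

-- insert a column
lemma srank_cols_insert (f : V → V → ZMod 2) (A C : Finset V) (c : V) :
    srank f A (insert c C) ≤ srank f A C + 1 := by
  classical
  set z : ↥A → ZMod 2 := fun i => f i.1 c with hz
  have h := srank_le_of_cols_mem f A (insert c C) (colSpan f A C ⊔ Submodule.span (ZMod 2) {z}) ?_
  · refine h.trans ?_
    refine (finrank_sup_le _ _).trans ?_
    have := finrank_span_singleton_le z
    rw [srank_eq_finrank]
    omega
  · intro j
    rcases Finset.mem_insert.mp j.2 with h1 | h1
    · apply Submodule.mem_sup_right
      apply Submodule.subset_span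
      simp only [Set.mem_singleton_iff]
      funext i
      rw [h1]
    · apply Submodule.mem_sup_left
      apply Submodule.subset_span
      exact ⟨⟨j.1, h1⟩, rfl⟩

-- insert a row
lemma srank_rows_insert (f : V → V → ZMod 2) (A C : Finset V) (a : V) :
    srank f (insert a A) C ≤ srank f A C + 1 := by
  rw [← srank_transpose f (insert a A) C, ← srank_transpose f A C]
  exact srank_cols_insert _ C A a

lemma srank_zero (f : V → V → ZMod 2) (A C : Finset V)
    (h : ∀ i ∈ A, ∀ j ∈ C, f i j = 0) : srank f A C = 0 := by
  unfold srank
  have : (Matrix.of (fun (i : ↥A) (j : ↥C) => f i.1 j.1)) = 0 := by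
    ext i j
    exact h i.1 i.2 j.1 j.2
  rw [this, Matrix.rank_zero]

lemma srank_bimodular (f : V → V → ZMod 2) (A₁ A₂ C₁ C₂ : Finset V) :
    srank f (A₁ ∩ A₂) (C₁ ∪ C₂) + srank f (A₁ ∪ A₂) (C₁ ∩ C₂)
      ≤ srank f A₁ C₁ + srank f A₂ C₂ := by
  classical
  set N₁ := colSpan f A₁ C₁ with hN₁
  set N₂ := colSpan f A₂ C₂ with hN₂
  set p1 : (↥A₁ → ZMod 2) →ₗ[ZMod 2] (↥(A₁ ∩ A₂) → ZMod 2) :=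
    LinearMap.funLeft (ZMod 2) (ZMod 2)
      (fun i => ⟨i.1, (Finset.mem_inter.mp i.2).1⟩) with hp1
  set p2 : (↥A₂ → ZMod 2) →ₗ[ZMod 2] (↥(A₁ ∩ A₂) → ZMod 2) :=
    LinearMap.funLeft (ZMod 2) (ZMod 2)
      (fun i => ⟨i.1, (Finset.mem_inter.mp i.2).2⟩) with hp2
  set q1 : (↥(A₁ ∪ A₂) → ZMod 2) →ₗ[ZMod 2] (↥A₁ → ZMod 2) :=
    LinearMap.funLeft (ZMod 2) (ZMod 2)
      (fun i => ⟨i.1, Finset.mem_union_left _ i.2⟩) with hq1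
  set q2 : (↥(A₁ ∪ A₂) → ZMod 2) →ₗ[ZMod 2] (↥A₂ → ZMod 2) :=
    LinearMap.funLeft (ZMod 2) (ZMod 2)
      (fun i => ⟨i.1, Finset.mem_union_right _ i.2⟩) with hq2
  set φ : (↥N₁ × ↥N₂) →ₗ[ZMod 2] (↥(A₁ ∩ A₂) → ZMod 2) :=
    LinearMap.coprod (p1.comp N₁.subtype) (-(p2.comp N₂.subtype)) with hφ
  -- claim 1
  have claim1 : colSpan f (A₁ ∩ A₂) (C₁ ∪ C₂) ≤ LinearMap.range φ := by
    unfold colSpan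
    apply Submodule.span_le.mpr
    rintro x ⟨j, rfl⟩
    rcases Finset.mem_union.mp j.2 with h | h
    · have hc : (fun i : ↥A₁ => f i.1 j.1) ∈ N₁ := by
        apply Submodule.subset_span; exact ⟨⟨j.1, h⟩, rfl⟩
      refine ⟨(⟨_, hc⟩, 0), ?_⟩
      funext i
      simp [hφ, hp1, LinearMap.funLeft]
    · have hc : (fun i : ↥A₂ => f i.1 j.1) ∈ N₂ := by
        apply Submodule.subset_span; exact ⟨⟨j.1, h⟩, rfl⟩
      have hc' : -(fun i : ↥A₂ => f i.1 j.1) ∈ N₂ := N₂.neg_mem hc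
      refine ⟨(0, ⟨_, hc'⟩), ?_⟩
      funext i
      simp [hφ, hp2, LinearMap.funLeft]
  -- the map ψ into the kernel
  have hmq1 : ∀ x ∈ colSpan f (A₁ ∪ A₂) (C₁ ∩ C₂), q1 x ∈ N₁ := by
    intro x hx
    have : Submodule.map q1 (colSpan f (A₁ ∪ A₂) (C₁ ∩ C₂)) ≤ N₁ := by
      unfold colSpan
      rw [Submodule.map_span, ← Set.range_comp]
      apply Submodule.span_le.mpr
      rintro y ⟨j, rfl⟩
      apply Submodule.subset_span
      exact ⟨⟨j.1, (Finset.mem_inter.mp j.2).1⟩, rfl⟩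
    exact this ⟨x, hx, rfl⟩
  have hmq2 : ∀ x ∈ colSpan f (A₁ ∪ A₂) (C₁ ∩ C₂), q2 x ∈ N₂ := by
    intro x hx
    have : Submodule.map q2 (colSpan f (A₁ ∪ A₂) (C₁ ∩ C₂)) ≤ N₂ := by
      unfold colSpan
      rw [Submodule.map_span, ← Set.range_comp]
      apply Submodule.span_le.mpr
      rintro y ⟨j, rfl⟩
      apply Submodule.subset_span
      exact ⟨⟨j.1, (Finset.mem_inter.mp j.2).2⟩, rfl⟩
    exact this ⟨x, hx, rfl⟩
  set U := colSpan f (A₁ ∪ A₂) (C₁ ∩ C₂) with hU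
  set ψ : ↥U →ₗ[ZMod 2] (↥N₁ × ↥N₂) :=
    LinearMap.prod
      (LinearMap.codRestrict N₁ (q1.comp U.subtype) (fun c => hmq1 c.1 c.2))
      (LinearMap.codRestrict N₂ (q2.comp U.subtype) (fun c => hmq2 c.1 c.2)) with hψ
  have ψinj : Function.Injective ψ := by
    intro x y hxy
    have h1 : q1 x.1 = q1 y.1 := congrArg Subtype.val (congrArg Prod.fst hxy)
    have h2 : q2 x.1 = q2 y.1 := congrArg Subtype.val (congrArg Prod.snd hxy)
    apply Subtype.ext
    funext i
    rcases Finset.mem_union.mp i.2 with h | h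
    · have := congrFun h1 ⟨i.1, h⟩
      simpa [hq1, LinearMap.funLeft] using this
    · have := congrFun h2 ⟨i.1, h⟩
      simpa [hq2, LinearMap.funLeft] using this
  have hrange : LinearMap.range ψ ≤ LinearMap.ker φ := by
    rintro _ ⟨x, rfl⟩
    show φ (ψ x) = 0
    funext i
    simp only [hφ, hψ, LinearMap.coprod_apply, LinearMap.prod_apply, Pi.prod,
      LinearMap.comp_apply, LinearMap.codRestrict_apply, LinearMap.neg_apply,
      Pi.add_apply, Pi.neg_apply, Pi.zero_apply, Submodule.coe_subtype]
    simp only [hp1, hp2, hq1, hq2, LinearMap.funLeft_apply]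
    exact add_neg_cancel _
  -- combine
  have e1 : srank f (A₁ ∩ A₂) (C₁ ∪ C₂) ≤ Module.finrank (ZMod 2) ↥(LinearMap.range φ) := by
    rw [srank_eq_finrank]
    exact Submodule.finrank_mono claim1
  have e2 : srank f (A₁ ∪ A₂) (C₁ ∩ C₂) ≤ Module.finrank (ZMod 2) ↥(LinearMap.ker φ) := by
    rw [srank_eq_finrank, ← LinearMap.finrank_range_of_inj ψinj]
    exact Submodule.finrank_mono hrange
  have e3 := LinearMap.finrank_range_add_finrank_ker φ
  have e4 : Module.finrank (ZMod 2) (↥N₁ × ↥N₂)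
      = Module.finrank (ZMod 2) ↥N₁ + Module.finrank (ZMod 2) ↥N₂ :=
    Module.finrank_prod
  rw [srank_eq_finrank f A₁ C₁, srank_eq_finrank f A₂ C₂, ← hN₁, ← hN₂]
  omega

lemma aM_comm (G : SimpleGraph V) (x y : V) : aM G x y = aM G y x := by
  unfold aM
  simp [SimpleGraph.adj_comm]

lemma aM_one {G : SimpleGraph V} {x y : V} (h : G.Adj x y) : aM G x y = 1 := by
  unfold aM; simp [h]

lemma aM_self (G : SimpleGraph V) (x : V) : aM G x x = 0 := by
  unfold aM; simp

lemma pivotToggle_iff {G : SimpleGraph V} {v w x y : V}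
    (hxv : x ≠ v) (hxw : x ≠ w) (hyv : y ≠ v) (hyw : y ≠ w) :
    PivotToggle G v w x y ↔ Xor' (G.Adj v x ∧ G.Adj w y) (G.Adj w x ∧ G.Adj v y) := by
  unfold PivotToggle SideA SideB SideC Xor' Xor
  simp only [hxv, hxw, hyv, hyw, ne_eq, not_false_iff, and_true]
  tauto

lemma pivotToggle_v {G : SimpleGraph V} {v w x : V} :
    ¬ PivotToggle G v w x v := by
  unfold PivotToggle SideA SideB SideC
  simp

lemma pivot_adj_of_ne {G : SimpleGraph V} {v w x y : V}
    (hxv : x ≠ v) (hxw : x ≠ w) (hyv : y ≠ v) (hyw : y ≠ w) :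
    (pivot G v w).Adj x y ↔ x ≠ y ∧
      Xor' (G.Adj x y) (Xor' (G.Adj v x ∧ G.Adj w y) (G.Adj w x ∧ G.Adj v y)) := by
  show x ≠ y ∧ Xor' (G.Adj (Equiv.swap v w x) (Equiv.swap v w y))
      (PivotToggle G v w (Equiv.swap v w x) (Equiv.swap v w y)) ↔ _
  rw [Equiv.swap_apply_of_ne_of_ne hxv hxw, Equiv.swap_apply_of_ne_of_ne hyv hyw,
    pivotToggle_iff hxv hxw hyv hyw]

lemma pivot_adj_w {G : SimpleGraph V} {v w x : V} (hvw : v ≠ w) (hxv : x ≠ v) (hxw : x ≠ w) :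
    (pivot G v w).Adj x w ↔ G.Adj x v := by
  show x ≠ w ∧ Xor' (G.Adj (Equiv.swap v w x) (Equiv.swap v w w))
      (PivotToggle G v w (Equiv.swap v w x) (Equiv.swap v w w)) ↔ _
  rw [Equiv.swap_apply_of_ne_of_ne hxv hxw, Equiv.swap_apply_right]
  simp [hxw, Xor', Xor, pivotToggle_v]

lemma pivot_entry {G : SimpleGraph V} {v w : V} (hvw : G.Adj v w) {x y : V}
    (hxv : x ≠ v) (hxw : x ≠ w) (hyv : y ≠ v) (hxy : x ≠ y) :
    aM G x y = aM (pivot G v w) x y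
      + aM G x v * (aM G w y + (if y = w then 1 else 0))
      + aM G x w * aM G v y := by
  rw [aM_comm G x v, aM_comm G x w]
  by_cases hyw : y = w
  · rw [hyw]
    have h1 : aM (pivot G v w) x w = aM G v x := by
      unfold aM
      rw [if_congr (pivot_adj_w (G.ne_of_adj hvw) hxv hxw) rfl rfl]
      simp [SimpleGraph.adj_comm]
    rw [h1, aM_self, aM_one hvw, if_pos rfl]
    unfold aM
    by_cases h2 : G.Adj v x <;> by_cases h3 : G.Adj w x <;>
      simp [h2, h3, SimpleGraph.adj_comm] <;> decide
  · have key : aM (pivot G v w) x y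
        = if (x ≠ y ∧ Xor' (G.Adj x y) (Xor' (G.Adj v x ∧ G.Adj w y) (G.Adj w x ∧ G.Adj v y)))
          then (1 : ZMod 2) else 0 := by
      unfold aM
      rw [if_congr (pivot_adj_of_ne hxv hxw hyv hyw) rfl rfl]
    rw [key]
    unfold aM
    by_cases h1 : G.Adj x y <;> by_cases h2 : G.Adj v x <;> by_cases h3 : G.Adj w x <;>
      by_cases h4 : G.Adj v y <;> by_cases h5 : G.Adj w y <;>
      simp [h1, h2, h3, h4, h5, hxy, hyw, Xor', SimpleGraph.adj_comm] <;> decide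

noncomputable def extZero (B : Finset V) (v : V) :
    (↥B → ZMod 2) →ₗ[ZMod 2] (↥(insert v B) → ZMod 2) where
  toFun g i := if h : i.1 ∈ B then g ⟨i.1, h⟩ else 0
  map_add' g h := by
    funext i
    by_cases hi : i.1 ∈ B <;> simp [hi]
  map_smul' c g := by
    funext i
    by_cases hi : i.1 ∈ B <;> simp [hi]

lemma extZero_apply (B : Finset V) (v : V) (g : ↥B → ZMod 2) (i : ↥(insert v B)) :
    extZero B v g i = if h : i.1 ∈ B then g ⟨i.1, h⟩ else 0 := rfl

lemma lemB (G : SimpleGraph V) {v w : V} (hvw : G.Adj v w) (B : Finset V)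
    (hB : B ⊆ Finset.univ \ {v}) (hw : w ∉ B) :
    srank (aM G) (insert v B) (insert v ((Finset.univ \ {v}) \ B))
      ≤ srank (aM (pivot G v w)) B ((Finset.univ \ {v}) \ B) + 1 := by
  classical
  set S := Finset.univ \ {v} with hS
  set C := S \ B with hC
  set H := pivot G v w with hH
  have hvB : v ∉ B := fun h => by simpa [hS] using hB h
  have hvC : v ∉ C := by simp [hC, hS]
  have hwv : w ≠ v := fun h => G.irrefl (h ▸ hvw)
  have hwC : w ∈ C := by simp [hC, hS, hwv, hw]
  have hcolw : ∀ x : V, x ≠ v → x ≠ w → aM H x w = aM G x v := by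
    intro x hxv hxw
    unfold aM
    rw [if_congr (pivot_adj_w (G.ne_of_adj hvw) hxv hxw) rfl rfl]
  set ι := extZero B v with hι
  set z : (↥(insert v B) → ZMod 2) := fun i => if i.1 = v then 1 else aM G i.1 w with hz
  set W := Submodule.map ι (colSpan (aM H) B C) ⊔ Submodule.span (ZMod 2) {z} with hW
  have hxmem : ∀ x : V, x ∈ B → x ≠ v ∧ x ≠ w := by
    intro x hx
    exact ⟨fun h => hvB (h ▸ hx), fun h => hw (h ▸ hx)⟩
  have hcolwmem : (fun k : ↥B => aM H k.1 w) ∈ colSpan (aM H) B C := by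
    apply Submodule.subset_span
    exact ⟨⟨w, hwC⟩, rfl⟩
  have hcols : ∀ j : ↥(insert v C), (fun i : ↥(insert v B) => aM G i.1 j.1) ∈ W := by
    intro j
    rcases Finset.mem_insert.mp j.2 with hj | hj
    · -- column v
      have he : (fun i : ↥(insert v B) => aM G i.1 j.1)
          = ι (fun k : ↥B => aM H k.1 w) := by
        funext i
        rw [extZero_apply]
        by_cases hi : i.1 ∈ B
        · rw [dif_pos hi, hcolw i.1 (hxmem i.1 hi).1 (hxmem i.1 hi).2, hj]
        · have : i.1 = v := by
            rcases Finset.mem_insert.mp i.2 with h | h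
            · exact h
            · exact absurd h hi
          rw [dif_neg hi, this, hj, aM_self]
      rw [he, hW]
      exact Submodule.mem_sup_left ⟨_, hcolwmem, rfl⟩
    · -- column y ∈ C
      set y := j.1 with hy
      have hyv : y ≠ v := fun h => hvC (h ▸ hj)
      have hyB : y ∉ B := by
        have := Finset.mem_sdiff.mp hj
        exact this.2
      have he : (fun i : ↥(insert v B) => aM G i.1 y)
          = ι ((fun k : ↥B => aM H k.1 y)
                + (aM G w y + (if y = w then 1 else 0)) • (fun k : ↥B => aM H k.1 w))
            + (aM G v y) • z := by
        funext i
        simp only [Pi.add_apply, Pi.smul_apply, smul_eq_mul]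
        rw [extZero_apply]
        by_cases hi : i.1 ∈ B
        · rw [dif_pos hi]
          simp only [Pi.add_apply, Pi.smul_apply, smul_eq_mul]
          have hxv := (hxmem i.1 hi).1
          have hxw := (hxmem i.1 hi).2
          have hxy : i.1 ≠ y := fun h => hyB (h ▸ hi)
          have hpe := pivot_entry hvw hxv hxw hyv hxy
          rw [hcolw i.1 hxv hxw]
          have hzi : z i = aM G i.1 w := by rw [hz]; simp [hxv]
          rw [hzi, hH, hpe]
          ring
        · have hiv : i.1 = v := by
            rcases Finset.mem_insert.mp i.2 with h | h
            · exact h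
            · exact absurd h hi
          rw [dif_neg hi]
          have hzi : z i = 1 := by rw [hz]; simp [hiv]
          rw [hzi, hiv, mul_one, zero_add]
      rw [he, hW]
      apply Submodule.add_mem
      · apply Submodule.mem_sup_left
        exact ⟨_, Submodule.add_mem _ (Submodule.subset_span ⟨⟨y, hj⟩, rfl⟩)
            (Submodule.smul_mem _ _ hcolwmem), rfl⟩
      · exact Submodule.mem_sup_right (Submodule.smul_mem _ _
          (Submodule.subset_span rfl))
  have h1 := srank_le_of_cols_mem (aM G) (insert v B) (insert v C) W hcols
  refine h1.trans ?_
  rw [hW]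
  refine (finrank_sup_le _ _).trans ?_
  have h2 : Module.finrank (ZMod 2) ↥(Submodule.map ι (colSpan (aM H) B C))
      ≤ srank (aM H) B C := by
    rw [srank_eq_finrank]
    exact Submodule.finrank_map_le ι _
  have h3 := finrank_span_singleton_le (M := ↥(insert v B) → ZMod 2) z
  omega

lemma cutRank_eq_srank (G : SimpleGraph V) (S X : Finset V) :
    cutRank G S X = srank (aM G) X (S \ X) := rfl

lemma lemB' (G : SimpleGraph V) {v w : V} (hvw : G.Adj v w) (B : Finset V)
    (hB : B ⊆ Finset.univ \ {v}) :
    srank (aM G) (insert v B) (insert v ((Finset.univ \ {v}) \ B))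
      ≤ srank (aM (pivot G v w)) B ((Finset.univ \ {v}) \ B) + 1 := by
  classical
  by_cases hw : w ∈ B
  · have hw' : w ∉ (Finset.univ \ {v}) \ B := by simp [hw]
    have h := lemB G hvw ((Finset.univ \ {v}) \ B) Finset.sdiff_subset hw'
    have hsd : (Finset.univ \ {v}) \ ((Finset.univ \ {v}) \ B) = B := by
      rw [sdiff_sdiff_right_self]
      exact inf_eq_right.mpr hB
    rw [hsd] at h
    calc srank (aM G) (insert v B) (insert v ((Finset.univ \ {v}) \ B))
        = srank (aM G) (insert v ((Finset.univ \ {v}) \ B)) (insert v B) := srank_symm _ _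
      _ ≤ srank (aM (pivot G v w)) ((Finset.univ \ {v}) \ B) B + 1 := h
      _ = srank (aM (pivot G v w)) B ((Finset.univ \ {v}) \ B) + 1 := by rw [srank_symm]
  · exact lemB G hvw B hB hw

lemma lemD {G : SimpleGraph V} (hG : RankConnAll G Finset.univ 3) (k : ℕ) (hk : k ≤ 3)
    (Z : Finset V) (h1 : k ≤ Z.card) (h2 : k ≤ (Finset.univ \ Z).card) :
    k ≤ cutRank G Finset.univ Z := by
  by_contra hlt
  push_neg at hlt
  have h3 : ((cutRank G Finset.univ Z : ℕ) : ℤ) < (k : ℤ) := by exact_mod_cast hlt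
  have h4 := hG k (by exact_mod_cast hk) Z (Finset.subset_univ Z) h3
  rw [add_zero, min_lt_iff] at h4
  rcases h4 with h | h
  · have : Z.card < k := by exact_mod_cast h
    omega
  · have : (Finset.univ \ Z).card < k := by exact_mod_cast h
    omega

lemma compl_insert_v {v : V} {A : Finset V} (hA : A ⊆ Finset.univ \ {v}) :
    Finset.univ \ A = insert v ((Finset.univ \ {v}) \ A) := by
  have hvA : v ∉ A := fun h => by simpa using hA h
  ext x
  by_cases hx : x = v <;> simp [hx, hvA]

lemma compl_insert_v' {v : V} (A : Finset V) :
    Finset.univ \ (insert v A) = (Finset.univ \ {v}) \ A := by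
  ext x
  simp [not_or, and_comm]

lemma card_compl_eq {v : V} {A : Finset V} (hA : A ⊆ Finset.univ \ {v}) :
    (Finset.univ \ A).card = ((Finset.univ \ {v}) \ A).card + 1 := by
  rw [compl_insert_v hA, Finset.card_insert_of_notMem (by simp)]

lemma exists_neighbor {G : SimpleGraph V} (hG : RankConnAll G Finset.univ 3)
    (hcard : 6 ≤ Fintype.card V) (v : V) : ∃ w, G.Adj v w := by
  by_contra h
  push_neg at h
  have h0 : cutRank G Finset.univ {v} = 0 := by
    rw [cutRank_eq_srank]
    apply srank_zero
    intro i hi j hj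
    rw [Finset.mem_singleton] at hi
    subst hi
    unfold aM
    simp [h j]
  have hc2 : 1 ≤ (Finset.univ \ ({v} : Finset V)).card := by
    rw [Finset.card_sdiff_of_subset (Finset.subset_univ _), Finset.card_singleton, Finset.card_univ]
    omega
  have h1 := lemD hG 1 (by norm_num) {v} (by simp) hc2
  omega

lemma prime_of_bounds (G Γ : SimpleGraph V) (hG : RankConnAll G Finset.univ 3)
    (hcard : 6 ≤ Fintype.card V) (v : V)
    (hb : ∀ A : Finset V, A ⊆ Finset.univ \ {v} →
      cutRank G Finset.univ A ≤ cutRank Γ (Finset.univ \ {v}) A + 1 ∧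
      cutRank G Finset.univ (insert v A) ≤ cutRank Γ (Finset.univ \ {v}) A + 1) :
    IsPrime Γ (Finset.univ \ {v}) := by
  classical
  set S := Finset.univ \ {v} with hS
  have hcardS : S.card = Fintype.card V - 1 := by
    rw [hS, Finset.card_sdiff_of_subset (Finset.subset_univ _), Finset.card_singleton, Finset.card_univ]
  constructor
  · -- connectivity
    rw [SimpleGraph.connected_iff]
    constructor
    · intro a b
      by_contra hnr
      set Pp : Finset V := S.filter
        (fun u => ∃ hu : u ∈ (↑S : Set V), (Γ.induce (↑S : Set V)).Reachable a ⟨u, hu⟩) with hPp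
      have haP : a.1 ∈ Pp := by
        rw [hPp, Finset.mem_filter]
        exact ⟨Finset.mem_coe.mp a.2, ⟨a.2, by exact SimpleGraph.Reachable.refl _⟩⟩
      have hbP : b.1 ∉ Pp := by
        intro hmem
        rcases (Finset.mem_filter.mp hmem).2 with ⟨hu, hr⟩
        exact hnr (by convert hr using 2)
      have hPpS : Pp ⊆ S := Finset.filter_subset _ _
      have hbS : b.1 ∈ S \ Pp := Finset.mem_sdiff.mpr ⟨Finset.mem_coe.mp b.2, hbP⟩
      have hcross : ∀ p ∈ Pp, ∀ q ∈ S \ Pp, ¬ Γ.Adj p q := by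
        intro p hp q hq hadj
        rcases (Finset.mem_filter.mp hp).2 with ⟨hpu, hr⟩
        have hqS : q ∈ S := (Finset.mem_sdiff.mp hq).1
        have hqS' : q ∈ (↑S : Set V) := Finset.mem_coe.mpr hqS
        have hadj' : (Γ.induce (↑S : Set V)).Adj ⟨p, hpu⟩ ⟨q, hqS'⟩ := by
          simp only [SimpleGraph.comap_adj, Function.Embedding.coe_subtype]
          exact hadj
        have : q ∈ Pp := by
          rw [hPp, Finset.mem_filter]
          exact ⟨hqS, ⟨hqS', hr.trans hadj'.reachable⟩⟩
        exact (Finset.mem_sdiff.mp hq).2 this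
      have h0 : cutRank Γ S Pp = 0 := by
        rw [cutRank_eq_srank]
        apply srank_zero
        intro i hi j hj
        unfold aM
        simp [hcross i hi j hj]
      have hb1 := (hb Pp hPpS).1
      have hb2 := (hb Pp hPpS).2
      rw [h0] at hb1 hb2
      -- |Pp| = 1
      have hcc : (Finset.univ \ Pp).card = (S \ Pp).card + 1 := card_compl_eq hPpS
      have hSP1 : 1 ≤ (S \ Pp).card := Finset.card_pos.mpr ⟨b.1, hbS⟩
      have hP1 : 1 ≤ Pp.card := Finset.card_pos.mpr ⟨a.1, haP⟩
      have hd1 := lemD hG 2 (by norm_num) Pp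
      have hPle : Pp.card ≤ 1 := by
        by_contra hgt
        push_neg at hgt
        have := hd1 hgt (by omega)
        omega
      have hPeq : Pp.card = 1 := le_antisymm hPle hP1
      -- insert v Pp
      have hvP : v ∉ Pp := fun h => by simpa [hS] using hPpS h
      have hci : (insert v Pp).card = 2 := by
        rw [Finset.card_insert_of_notMem hvP, hPeq]
      have hcc2 : (Finset.univ \ (insert v Pp)).card = (S \ Pp).card := by
        rw [hS, ← compl_insert_v' Pp]
      have hSPbig : 2 ≤ (S \ Pp).card := by
        have : (S \ Pp).card = S.card - Pp.card := Finset.card_sdiff_of_subset hPpS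
        omega
      have hd2 := lemD hG 2 (by norm_num) (insert v Pp) (by omega) (by omega)
      omega
    · -- nonempty
      have : S.Nonempty := by
        rw [← Finset.card_pos]
        omega
      rcases this with ⟨x, hx⟩
      exact ⟨⟨x, Finset.mem_coe.mpr hx⟩⟩
  · -- no split
    rintro A ⟨hA, hcr, h2, h2'⟩
    have hb1 := (hb A hA).1
    have hb2 := (hb A hA).2
    have hvA : v ∉ A := fun h => by simpa [hS] using hA h
    have hcc : (Finset.univ \ A).card = (S \ A).card + 1 := card_compl_eq hA
    have hd1 := lemD hG 3 (by norm_num) A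
    have hAle : A.card ≤ 2 := by
      by_contra hgt
      push_neg at hgt
      have := hd1 (by omega) (by omega)
      omega
    have hci : (insert v A).card = A.card + 1 := Finset.card_insert_of_notMem hvA
    have hcc2 : (Finset.univ \ (insert v A)).card = (S \ A).card := by
      rw [hS, ← compl_insert_v' A]
    have hd2 := lemD hG 3 (by norm_num) (insert v A)
    have hSAle : (S \ A).card ≤ 2 := by
      by_contra hgt
      push_neg at hgt
      have := hd2 (by omega) (by omega)
      omega
    have hcardsum : S.card = A.card + (S \ A).card := by
      rw [Finset.card_sdiff_of_subset hA]
      have := Finset.card_le_card hA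
      omega
    omega

lemma rankConnH (G : SimpleGraph V) (hG : RankConnAll G Finset.univ 3)
    (hcard : 6 ≤ Fintype.card V) {v w : V} (hvw : G.Adj v w)
    {X : Finset V} (hXS : X ⊆ Finset.univ \ {v})
    (hXr : cutRank G (Finset.univ \ {v}) X ≤ 2)
    (hX5 : 5 ≤ X.card) (hX5' : 5 ≤ ((Finset.univ \ {v}) \ X).card) :
    RankConn (pivot G v w) (Finset.univ \ {v}) 3 2 := by
  classical
  set S := Finset.univ \ {v} with hS
  set H := pivot G v w with hH
  intro B hB hcr
  by_contra hmin
  push_neg at hmin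
  rw [le_min_iff] at hmin
  have hB5 : 5 ≤ B.card := by exact_mod_cast hmin.1
  have hB5' : 5 ≤ (S \ B).card := by exact_mod_cast hmin.2
  have hcrB : cutRank H S B ≤ 2 := by
    have h : (cutRank H S B : ℤ) < 3 := hcr
    omega
  -- membership facts
  have hvX : v ∉ X := fun h => by simpa [hS] using hXS h
  have hvB : v ∉ B := fun h => by simpa [hS] using hB h
  have hmemS : ∀ x : V, x ∈ S ↔ x ≠ v := by intro x; simp [hS]
  -- the two pivot bounds
  have hkey1 : srank (aM G) (insert v B) (insert v (S \ B)) ≤ 3 := by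
    have h := lemB' G hvw B hB
    rw [← hS] at h
    have h2 : srank (aM (pivot G v w)) B (S \ B) ≤ 2 := hcrB
    omega
  have hsd : S \ (S \ B) = B := by
    rw [sdiff_sdiff_right_self]
    exact inf_eq_right.mpr hB
  have hkey2 : srank (aM G) (insert v (S \ B)) (insert v B) ≤ 3 := by
    have h := lemB' G hvw (S \ B) (by rw [hS] at hB ⊢; exact Finset.sdiff_subset)
    rw [← hS, hsd] at h
    have h2 : srank (aM (pivot G v w)) (S \ B) B ≤ 2 := by
      rw [srank_symm]
      exact hcrB
    omega
  have hXr' : srank (aM G) X (S \ X) ≤ 2 := hXr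
  -- index set identities
  have id1 : X ∩ insert v B = X ∩ B := by
    ext x
    by_cases hx : x = v <;> simp [hS, hx, hvX, hvB] <;> tauto
  have id2 : (S \ X) ∪ insert v (S \ B) = Finset.univ \ (X ∩ B) := by
    ext x
    by_cases hx : x = v <;> simp [hS, hx, hvX, hvB] <;> tauto
  have id3 : X ∪ insert v B = insert v (X ∪ B) := by
    ext x
    by_cases hx : x = v <;> simp [hS, hx, hvX, hvB] <;> tauto
  have id4 : (S \ X) ∩ insert v (S \ B) = Finset.univ \ (insert v (X ∪ B)) := by
    ext x
    by_cases hx : x = v <;> simp [hS, hx, hvX, hvB] <;> tauto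
  have id1' : X ∩ insert v (S \ B) = X \ B := by
    ext x
    by_cases hx : x = v <;> simp [hS, hx, hvX, hvB] <;> tauto
  have id2' : (S \ X) ∪ insert v B = Finset.univ \ (X \ B) := by
    ext x
    by_cases hx : x = v <;> simp [hS, hx, hvX, hvB] <;> tauto
  have id3' : X ∪ insert v (S \ B) = insert v (X ∪ (S \ B)) := by
    ext x
    by_cases hx : x = v <;> simp [hS, hx, hvX, hvB] <;> tauto
  have id4' : (S \ X) ∩ insert v B = Finset.univ \ (insert v (X ∪ (S \ B))) := by
    ext x
    by_cases hx : x = v <;> simp [hS, hx, hvX, hvB] <;> tauto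
  -- bimodular applications
  have bi1 := srank_bimodular (aM G) X (insert v B) (S \ X) (insert v (S \ B))
  rw [id1, id2, id3, id4] at bi1
  have bi2 := srank_bimodular (aM G) X (insert v (S \ B)) (S \ X) (insert v B)
  rw [id1', id2', id3', id4'] at bi2
  have sum1 : srank (aM G) (X ∩ B) (Finset.univ \ (X ∩ B))
      + srank (aM G) (insert v (X ∪ B)) (Finset.univ \ (insert v (X ∪ B))) ≤ 5 := by
    omega
  have sum2 : srank (aM G) (X \ B) (Finset.univ \ (X \ B))
      + srank (aM G) (insert v (X ∪ (S \ B))) (Finset.univ \ (insert v (X ∪ (S \ B)))) ≤ 5 := by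
    omega
  -- cardinalities
  set n := Fintype.card V with hn
  set p := (X ∩ B).card with hp
  set q := (X \ B).card with hq
  set r := (B \ X).card with hr
  set u := (S \ (X ∪ B)).card with hu
  have cX : p + q = X.card := Finset.card_inter_add_card_sdiff X B
  have cB : p + r = B.card := by
    rw [Finset.inter_comm] at hp
    rw [hp, hr]
    exact Finset.card_inter_add_card_sdiff B X
  have eSB1 : (S \ B) ∩ X = X \ B := by
    ext x
    by_cases hx : x = v <;> simp [hS, hx, hvX, hvB] <;> tauto
  have eSB2 : (S \ B) \ X = S \ (X ∪ B) := by
    ext x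
    by_cases hx : x = v <;> simp [hS, hx, hvX, hvB] <;> tauto
  have eSX1 : (S \ X) ∩ B = B \ X := by
    ext x
    by_cases hx : x = v <;> simp [hS, hx, hvX, hvB] <;> tauto
  have eSX2 : (S \ X) \ B = S \ (X ∪ B) := by
    ext x
    by_cases hx : x = v <;> simp [hS, hx, hvX, hvB] <;> tauto
  have eBX : S \ (X ∪ (S \ B)) = B \ X := by
    ext x
    by_cases hx : x = v <;> simp [hS, hx, hvX, hvB] <;> tauto
  have cSB : q + u = (S \ B).card := by
    have h := Finset.card_inter_add_card_sdiff (S \ B) X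
    rw [eSB1, eSB2] at h
    rw [hq, hu]
    exact h
  have cSX : r + u = (S \ X).card := by
    have h := Finset.card_inter_add_card_sdiff (S \ X) B
    rw [eSX1, eSX2] at h
    rw [hr, hu]
    exact h
  -- global cardinalities
  have hnuniv : (Finset.univ : Finset V).card = n := Finset.card_univ
  have hScard : S.card + 1 = n := by
    rw [hS, Finset.card_sdiff_of_subset (Finset.subset_univ _), Finset.card_singleton, hnuniv]
    have : 1 ≤ n := by omega
    omega
  have hXS' : X.card ≤ S.card := Finset.card_le_card hXS
  have cStot : X.card + (S \ X).card = S.card := by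
    rw [Finset.card_sdiff_of_subset hXS]
    omega
  have c1 : (Finset.univ \ (X ∩ B)).card + p = n := by
    rw [Finset.card_sdiff_of_subset (Finset.subset_univ _), hnuniv]
    have hle : (X ∩ B).card ≤ n := by
      rw [← hnuniv]; exact Finset.card_le_card (Finset.subset_univ _)
    rw [← hp] at hle ⊢
    omega
  have c2 : (Finset.univ \ (insert v (X ∪ B))).card = u := by
    rw [compl_insert_v' (X ∪ B), ← hS]
  have c3 : (Finset.univ \ (X \ B)).card + q = n := by
    rw [Finset.card_sdiff_of_subset (Finset.subset_univ _), hnuniv]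
    have hle : (X \ B).card ≤ n := by
      rw [← hnuniv]; exact Finset.card_le_card (Finset.subset_univ _)
    rw [← hq] at hle ⊢
    omega
  have c4 : (Finset.univ \ (insert v (X ∪ (S \ B)))).card = r := by
    rw [compl_insert_v' (X ∪ (S \ B)), ← hS, eBX]
  have hvXB : v ∉ X ∪ B := by simp [hvX, hvB]
  have ci1 : (insert v (X ∪ B)).card = (X ∪ B).card + 1 :=
    Finset.card_insert_of_notMem hvXB
  have cu : (X ∪ B).card + p = X.card + B.card := by
    rw [hp]
    exact Finset.card_union_add_card_inter X B
  have ci2 : X.card ≤ (insert v (X ∪ (S \ B))).card := by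
    apply Finset.card_le_card
    intro x hx
    exact Finset.mem_insert_of_mem (Finset.mem_union_left _ hx)
  -- dichotomies
  have alt1 : p ≤ 2 ∨ u ≤ 2 := by
    by_contra hcon
    push_neg at hcon
    have g1 := lemD hG 3 (by norm_num) (X ∩ B) (by omega) (by omega)
    have g2 := lemD hG 3 (by norm_num) (insert v (X ∪ B)) (by omega) (by omega)
    rw [cutRank_eq_srank] at g1 g2
    omega
  have alt2 : q ≤ 2 ∨ r ≤ 2 := by
    by_contra hcon
    push_neg at hcon
    have g1 := lemD hG 3 (by norm_num) (X \ B) (by omega) (by omega)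
    have g2 := lemD hG 3 (by norm_num) (insert v (X ∪ (S \ B))) (by omega) (by omega)
    rw [cutRank_eq_srank] at g1 g2
    omega
  omega

lemma hbG (G : SimpleGraph V) (v : V) (A : Finset V) (hA : A ⊆ Finset.univ \ {v}) :
    cutRank G Finset.univ A ≤ cutRank G (Finset.univ \ {v}) A + 1 ∧
    cutRank G Finset.univ (insert v A) ≤ cutRank G (Finset.univ \ {v}) A + 1 := by
  constructor
  · rw [cutRank_eq_srank, cutRank_eq_srank, compl_insert_v hA]
    exact srank_cols_insert _ _ _ _
  · rw [cutRank_eq_srank, cutRank_eq_srank, compl_insert_v' A]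
    exact srank_rows_insert _ _ _ _

lemma hbP (G : SimpleGraph V) {v w : V} (hvw : G.Adj v w) (A : Finset V)
    (hA : A ⊆ Finset.univ \ {v}) :
    cutRank G Finset.univ A ≤ cutRank (pivot G v w) (Finset.univ \ {v}) A + 1 ∧
    cutRank G Finset.univ (insert v A) ≤ cutRank (pivot G v w) (Finset.univ \ {v}) A + 1 := by
  have hkey := lemB' G hvw A hA
  constructor
  · rw [cutRank_eq_srank, cutRank_eq_srank, compl_insert_v hA]
    exact le_trans (srank_rows_mono _ (Finset.subset_insert v A) _) hkey
  · rw [cutRank_eq_srank, cutRank_eq_srank, compl_insert_v' A]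
    exact le_trans (srank_cols_mono _ _ (Finset.subset_insert v _)) hkey

end Aux

theorem threeRankConn_prime_minor {G : SimpleGraph V} (hG : RankConnAll G Finset.univ 3)
    (hcard : 6 ≤ Fintype.card V) (v : V) :
    (IsPrime G (Finset.univ \ {v}) ∧ RankConn G (Finset.univ \ {v}) 3 2) ∨
      ∃ w, G.Adj v w ∧ IsPrime (pivot G v w) (Finset.univ \ {v}) ∧
        RankConn (pivot G v w) (Finset.univ \ {v}) 3 2 := by
  classical
  by_cases hc : RankConn G (Finset.univ \ {v}) 3 2
  · exact Or.inl ⟨prime_of_bounds G G hG hcard v (fun A hA => hbG G v A hA), hc⟩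
  · right
    unfold RankConn at hc
    push_neg at hc
    obtain ⟨X, hXS, hXr, hXmin⟩ := hc
    rw [le_min_iff] at hXmin
    have hXr' : cutRank G (Finset.univ \ {v}) X ≤ 2 := by
      have h : (cutRank G (Finset.univ \ {v}) X : ℤ) < 3 := hXr
      omega
    have hX5 : 5 ≤ X.card := by
      have := hXmin.1
      exact_mod_cast this
    have hX5' : 5 ≤ ((Finset.univ \ {v}) \ X).card := by
      have := hXmin.2
      exact_mod_cast this
    obtain ⟨w, hvw⟩ := exists_neighbor hG hcard v
    exact ⟨w, hvw, prime_of_bounds G (pivot G v w) hG hcard v (fun A hA => hbP G hvw A hA),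
      rankConnH G hG hcard hvw hXS hXr' hX5 hX5'⟩
end

section
/- Let G be a prime graph and a, b, c distinct vertices with ρ_G({a,b,c}) = 2. Then there exists a graph G' pivot-equivalent to G such that {a,b,c} is a triplet of G', i.e., ρ_{G'}({a,b,c}) = 2 and ρ_{G'∖x}({a,b,c}−{x}) = 2 for each x ∈ {a,b,c}. -/
open Finset

variable {V : Type} [Fintype V] [DecidableEq V]

open scoped Classical

set_option linter.unusedSectionVars false

noncomputable def chi (G : SimpleGraph V) (x y : V) : ZMod 2 := if G.Adj x y then 1 else 0

noncomputable def rowFun (G : SimpleGraph V) (Y : Finset V) (x : V) : ↥Y → ZMod 2 :=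
  fun j => chi G x j.1

lemma chi_symm (G : SimpleGraph V) (x y : V) : chi G x y = chi G y x := by
  unfold chi; rw [SimpleGraph.adj_comm]

lemma chi_eq_one (G : SimpleGraph V) {x y : V} (h : G.Adj x y) : chi G x y = 1 := if_pos h
lemma chi_eq_zero (G : SimpleGraph V) {x y : V} (h : ¬ G.Adj x y) : chi G x y = 0 := if_neg h

lemma adj_iff_chi (G : SimpleGraph V) (x y : V) : G.Adj x y ↔ chi G x y = 1 := by
  unfold chi; split <;> simp_all

lemma cutRankOn_eq_finrank (G : SimpleGraph V) (X Y : Finset V) :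
    cutRankOn G X Y =
      Module.finrank (ZMod 2) (Submodule.span (ZMod 2) ((rowFun G Y) '' (↑X : Set V))) := by
  unfold cutRankOn
  rw [Matrix.rank_eq_finrank_span_row]
  have hset : Set.range (Matrix.of fun (i : ↥X) (j : ↥Y) =>
      if G.Adj i.1 j.1 then (1 : ZMod 2) else 0).row = (rowFun G Y) '' (↑X : Set V) := by
    rw [← Subtype.range_coe (s := (↑X : Set V)), ← Set.range_comp]
    rfl
  rw [hset]

-- GF(2) module facts
section GF2
variable {M : Type} [AddCommGroup M] [Module (ZMod 2) M]

lemma zmod2_cases (s : ZMod 2) : s = 0 ∨ s = 1 := by fin_cases s <;> [exact Or.inl rfl; exact Or.inr rfl]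

lemma gf2_add_self (u : M) : u + u = 0 := by
  have h2 : ((2 : ZMod 2)) = 0 := by decide
  have : (2 : ZMod 2) • u = 0 := by rw [h2, zero_smul]
  simpa [two_smul] using this

lemma gf2_add_eq_zero {u v : M} (h : u + v = 0) : u = v := by
  have := congrArg (fun t => t + v) h
  simpa [add_assoc, gf2_add_self] using this

lemma gf2_pair_indep {u v : M} (hu : u ≠ 0) (hv : v ≠ 0) (huv : u ≠ v) :
    LinearIndependent (ZMod 2) ![u, v] := by
  rw [LinearIndependent.pair_iff]
  intro s t hst
  rcases zmod2_cases s with hs | hs <;> rcases zmod2_cases t with ht | ht <;>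
    subst hs <;> subst ht <;> simp_all
  · exact absurd (gf2_add_eq_zero hst) huv

lemma gf2_finrank_span_pair {u v : M} (hu : u ≠ 0) (hv : v ≠ 0) (huv : u ≠ v) :
    Module.finrank (ZMod 2) (Submodule.span (ZMod 2) {u, v}) = 2 := by
  have h := finrank_span_eq_card (gf2_pair_indep hu hv huv)
  rwa [Matrix.range_cons_cons_empty, Fintype.card_fin] at h

end GF2


section PivotLemmas
variable {V : Type} [Fintype V] [DecidableEq V]

lemma pivot_chi_main (G : SimpleGraph V) {v w x y : V}
    (hxv : x ≠ v) (hxw : x ≠ w) (hyv : y ≠ v) (hyw : y ≠ w) (hxy : x ≠ y) :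
    chi (pivot G v w) x y = chi G x y + chi G v x * chi G w y + chi G w x * chi G v y := by
  have hadj : (pivot G v w).Adj x y ↔ Xor' (G.Adj x y) (PivotToggle G v w x y) := by
    constructor
    · rintro ⟨-, h⟩
      rwa [Equiv.swap_apply_of_ne_of_ne hxv hxw, Equiv.swap_apply_of_ne_of_ne hyv hyw] at h
    · intro h
      exact ⟨hxy, by
        rwa [Equiv.swap_apply_of_ne_of_ne hxv hxw, Equiv.swap_apply_of_ne_of_ne hyv hyw]⟩
  unfold chi
  rw [if_congr hadj rfl rfl]
  unfold PivotToggle SideA SideB SideC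
  by_cases h1 : G.Adj x y <;> by_cases h2 : G.Adj v x <;> by_cases h3 : G.Adj w x <;>
    by_cases h4 : G.Adj v y <;> by_cases h5 : G.Adj w y <;>
    simp_all [Xor'] <;> decide

lemma pivot_chi_xw (G : SimpleGraph V) {v w x : V} (hxv : x ≠ v) (hxw : x ≠ w) (hvw : v ≠ w) :
    chi (pivot G v w) x w = chi G x v := by
  have hadj : (pivot G v w).Adj x w ↔ G.Adj x v := by
    constructor
    · rintro ⟨-, h⟩
      rw [Equiv.swap_apply_of_ne_of_ne hxv hxw, Equiv.swap_apply_right] at h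
      rcases h with ⟨h, ht⟩ | ⟨h, ht⟩
      · exact h
      · exfalso; revert h
        unfold PivotToggle SideA SideB SideC
        simp [hvw]
    · intro h
      refine ⟨hxw, ?_⟩
      rw [Equiv.swap_apply_of_ne_of_ne hxv hxw, Equiv.swap_apply_right]
      left
      refine ⟨h, ?_⟩
      unfold PivotToggle SideA SideB SideC
      simp [hvw]
  unfold chi
  rw [if_congr hadj rfl rfl]

lemma pivot_chi_xv (G : SimpleGraph V) {v w x : V} (hxv : x ≠ v) (hxw : x ≠ w) (hvw : v ≠ w) :
    chi (pivot G v w) x v = chi G x w := by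
  have hadj : (pivot G v w).Adj x v ↔ G.Adj x w := by
    constructor
    · rintro ⟨-, h⟩
      rw [Equiv.swap_apply_of_ne_of_ne hxv hxw, Equiv.swap_apply_left] at h
      rcases h with ⟨h, ht⟩ | ⟨h, ht⟩
      · exact h
      · exfalso; revert h
        unfold PivotToggle SideA SideB SideC
        simp [hvw.symm]
    · intro h
      refine ⟨hxv, ?_⟩
      rw [Equiv.swap_apply_of_ne_of_ne hxv hxw, Equiv.swap_apply_left]
      left
      refine ⟨h, ?_⟩
      unfold PivotToggle SideA SideB SideC
      simp [hvw.symm]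
  unfold chi
  rw [if_congr hadj rfl rfl]

lemma pivot_chi_vy (G : SimpleGraph V) {v w y : V} (hyv : y ≠ v) (hyw : y ≠ w) (hvw : v ≠ w) :
    chi (pivot G v w) v y = chi G w y := by
  rw [chi_symm, pivot_chi_xv G hyv hyw hvw, chi_symm]

lemma pivot_chi_wy (G : SimpleGraph V) {v w y : V} (hyv : y ≠ v) (hyw : y ≠ w) (hvw : v ≠ w) :
    chi (pivot G v w) w y = chi G v y := by
  rw [chi_symm, pivot_chi_xw G hyv hyw hvw, chi_symm]

lemma pivot_chi_vw (G : SimpleGraph V) {v w : V} (hvw : v ≠ w) :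
    chi (pivot G v w) v w = chi G v w := by
  have hadj : (pivot G v w).Adj v w ↔ G.Adj v w := by
    constructor
    · rintro ⟨-, h⟩
      rw [Equiv.swap_apply_left, Equiv.swap_apply_right] at h
      rcases h with ⟨h, ht⟩ | ⟨h, ht⟩
      · exact h.symm
      · exfalso; revert h
        unfold PivotToggle SideA SideB SideC
        simp [hvw, hvw.symm]
    · intro h
      refine ⟨hvw, ?_⟩
      rw [Equiv.swap_apply_left, Equiv.swap_apply_right]
      left
      refine ⟨h.symm, ?_⟩
      unfold PivotToggle SideA SideB SideC
      simp [hvw, hvw.symm]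
  unfold chi
  rw [if_congr hadj rfl rfl]

end PivotLemmas


section Helpers
variable {V : Type} [Fintype V] [DecidableEq V]

open scoped Classical

lemma gf2_span_le_one {M : Type} [AddCommGroup M] [Module (ZMod 2) M] {s : Set M} {t : M}
    (h : s ⊆ ↑(Submodule.span (ZMod 2) {t})) :
    Module.finrank (ZMod 2) (Submodule.span (ZMod 2) s) ≤ 1 := by
  have h1 : Submodule.span (ZMod 2) s ≤ Submodule.span (ZMod 2) {t} := by
    rw [Submodule.span_le]; exact h
  have h2 : Module.finrank (ZMod 2) (Submodule.span (ZMod 2) ({t} : Set M)) ≤ 1 := by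
    refine (finrank_span_le_card ({t} : Set M)).trans ?_
    simp
  exact (Submodule.finrank_mono h1).trans h2

lemma triplet_perm {G' : SimpleGraph V} {a b c x y z : V}
    (h : ({x, y, z} : Finset V) = {a, b, c}) (ht : Triplet G' x y z) : Triplet G' a b c := by
  unfold Triplet at ht ⊢
  rw [← h]
  exact ht

lemma sdiff_triple_left {x y z : V} (hxy : x ≠ y) (hxz : x ≠ z) :
    ({x, y, z} : Finset V) \ {x} = {y, z} := by
  ext t
  simp only [Finset.mem_sdiff, Finset.mem_insert, Finset.mem_singleton]
  constructor
  · rintro ⟨h | h | h, hne⟩ <;> [exact absurd h hne; exact Or.inl h; exact Or.inr h]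
  · rintro (rfl | rfl) <;>
      [exact ⟨Or.inr (Or.inl rfl), fun h => hxy h.symm⟩;
       exact ⟨Or.inr (Or.inr rfl), fun h => hxz h.symm⟩]

lemma sdiff_triple_mid {x y z : V} (hxy : x ≠ y) (hyz : y ≠ z) :
    ({x, y, z} : Finset V) \ {y} = {x, z} := by
  ext t
  simp only [Finset.mem_sdiff, Finset.mem_insert, Finset.mem_singleton]
  constructor
  · rintro ⟨h | h | h, hne⟩ <;> [exact Or.inl h; exact absurd h hne; exact Or.inr h]
  · rintro (rfl | rfl) <;>
      [exact ⟨Or.inl rfl, hxy⟩; exact ⟨Or.inr (Or.inr rfl), fun h => hyz h.symm⟩]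

lemma sdiff_triple_right {x y z : V} (hxz : x ≠ z) (hyz : y ≠ z) :
    ({x, y, z} : Finset V) \ {z} = {x, y} := by
  ext t
  simp only [Finset.mem_sdiff, Finset.mem_insert, Finset.mem_singleton]
  constructor
  · rintro ⟨h | h | h, hne⟩ <;> [exact Or.inl h; exact Or.inr h; exact absurd h hne]
  · rintro (rfl | rfl) <;> [exact ⟨Or.inl rfl, hxz⟩; exact ⟨Or.inr (Or.inl rfl), hyz⟩]

lemma univ_sdiff_pair_of_triple (x y z : V) :
    (Finset.univ \ {x} : Finset V) \ {y, z} = Finset.univ \ {x, y, z} := by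
  ext t
  simp only [Finset.mem_sdiff, Finset.mem_univ, Finset.mem_insert, Finset.mem_singleton,
    true_and]
  tauto

lemma image_pair {Y : Finset V} (f : V → (↥Y → ZMod 2)) (p q : V) :
    f '' (↑({p, q} : Finset V) : Set V) = {f p, f q} := by
  rw [Finset.coe_insert, Finset.coe_singleton, Set.image_insert_eq, Set.image_singleton]

lemma image_triple {Y : Finset V} (f : V → (↥Y → ZMod 2)) (p q r : V) :
    f '' (↑({p, q, r} : Finset V) : Set V) = {f p, f q, f r} := by
  rw [Finset.coe_insert, Finset.coe_insert, Finset.coe_singleton, Set.image_insert_eq,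
    Set.image_insert_eq, Set.image_singleton]

end Helpers


section TripletMk
variable {V : Type} [Fintype V] [DecidableEq V]

open scoped Classical

lemma cutRank_pair_eq' (G : SimpleGraph V) {x y z t p q : V}
    (ht : t = x ∨ t = y ∨ t = z)
    (hpq : ({x, y, z} : Finset V) \ {t} = {p, q}) :
    cutRank G (Finset.univ \ {t}) (({x, y, z} : Finset V) \ {t}) =
      Module.finrank (ZMod 2) (Submodule.span (ZMod 2)
        ({rowFun G (Finset.univ \ {x, y, z}) p, rowFun G (Finset.univ \ {x, y, z}) q} :
          Set (↥(Finset.univ \ ({x, y, z} : Finset V)) → ZMod 2))) := by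
  unfold cutRank
  rw [hpq, univ_sdiff_pair_of_triple t p q]
  have hW : (Finset.univ \ ({t, p, q} : Finset V)) = Finset.univ \ ({x, y, z} : Finset V) := by
    have h2 : ({t, p, q} : Finset V) = {x, y, z} := by
      ext s
      have hmem : s ∈ ({p, q} : Finset V) ↔ s ∈ ({x, y, z} : Finset V) ∧ s ≠ t := by
        rw [← hpq]; simp [Finset.mem_sdiff]
      simp only [Finset.mem_insert, Finset.mem_singleton] at hmem ⊢
      by_cases hst : s = t
      · subst hst; tauto
      · tauto
    rw [h2]
  rw [hW, cutRankOn_eq_finrank, image_pair]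

lemma triplet_mk {G' : SimpleGraph V} {x y z : V} (hxy : x ≠ y) (hxz : x ≠ z) (hyz : y ≠ z)
    (hx : rowFun G' (Finset.univ \ {x, y, z}) x ≠ 0)
    (hy : rowFun G' (Finset.univ \ {x, y, z}) y ≠ 0)
    (hz : rowFun G' (Finset.univ \ {x, y, z}) z ≠ 0)
    (hxy' : rowFun G' (Finset.univ \ {x, y, z}) x ≠ rowFun G' (Finset.univ \ {x, y, z}) y)
    (hxz' : rowFun G' (Finset.univ \ {x, y, z}) x ≠ rowFun G' (Finset.univ \ {x, y, z}) z)
    (hyz' : rowFun G' (Finset.univ \ {x, y, z}) y ≠ rowFun G' (Finset.univ \ {x, y, z}) z)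
    (hsum : rowFun G' (Finset.univ \ {x, y, z}) x + rowFun G' (Finset.univ \ {x, y, z}) y +
      rowFun G' (Finset.univ \ {x, y, z}) z = 0) :
    Triplet G' x y z := by
  set W := Finset.univ \ ({x, y, z} : Finset V) with hWdef
  set ux := rowFun G' W x
  set uy := rowFun G' W y
  set uz := rowFun G' W z
  have hzsum : uz = ux + uy := by
    have h1 : (ux + uy) + uz = 0 := by rw [← hsum]
    exact (gf2_add_eq_zero h1).symm
  constructor
  · unfold cutRank
    rw [cutRankOn_eq_finrank, image_triple]
    have hspan : Submodule.span (ZMod 2) ({ux, uy, uz} : Set (↥W → ZMod 2)) =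
        Submodule.span (ZMod 2) ({ux, uy} : Set (↥W → ZMod 2)) := by
      apply le_antisymm
      · rw [Submodule.span_le]
        rintro t ht
        rcases ht with rfl | rfl | rfl
        · exact Submodule.subset_span (Set.mem_insert _ _)
        · exact Submodule.subset_span (Set.mem_insert_of_mem _ rfl)
        · rw [hzsum]
          exact Submodule.add_mem _ (Submodule.subset_span (Set.mem_insert _ _))
            (Submodule.subset_span (Set.mem_insert_of_mem _ rfl))
      · apply Submodule.span_mono
        intro t ht
        rcases ht with rfl | rfl
        · exact Set.mem_insert _ _
        · exact Set.mem_insert_of_mem _ (Set.mem_insert _ _)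
    rw [hspan]
    exact gf2_finrank_span_pair hx hy hxy'
  · intro t htmem
    simp only [Finset.mem_insert, Finset.mem_singleton] at htmem
    rcases htmem with rfl | rfl | rfl
    · rw [cutRank_pair_eq' G' (Or.inl rfl) (sdiff_triple_left hxy hxz)]
      exact gf2_finrank_span_pair hy hz hyz'
    · rw [cutRank_pair_eq' G' (Or.inr (Or.inl rfl)) (sdiff_triple_mid hxy hyz)]
      exact gf2_finrank_span_pair hx hz hxz'
    · rw [cutRank_pair_eq' G' (Or.inr (Or.inr rfl)) (sdiff_triple_right hxz hyz)]
      exact gf2_finrank_span_pair hx hy hxy'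

end TripletMk


section SplitLemma
variable {V : Type} [Fintype V] [DecidableEq V]

open scoped Classical

lemma rowFun_ne_zero_iff {G : SimpleGraph V} {Y : Finset V} {p : V} :
    rowFun G Y p ≠ 0 ↔ ∃ j : ↥Y, G.Adj p j.1 := by
  constructor
  · intro h
    rcases Function.ne_iff.mp h with ⟨j, hj⟩
    refine ⟨j, ?_⟩
    rw [adj_iff_chi]
    rcases zmod2_cases (chi G p j.1) with h0 | h1
    · exact absurd h0 (by simpa [rowFun] using hj)
    · exact h1
  · rintro ⟨j, hj⟩ h
    have := congrFun h j
    simp only [rowFun, Pi.zero_apply] at this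
    rw [chi_eq_one G hj] at this
    exact one_ne_zero this

lemma no_bad_pair {G : SimpleGraph V} (hp : IsPrime G Finset.univ) {p q t0 t1 : V}
    (hpq : p ≠ q) (ht0 : t0 ∈ (Finset.univ \ {p, q} : Finset V))
    (ht1 : t1 ∈ (Finset.univ \ {p, q} : Finset V)) (ht01 : t0 ≠ t1)
    (hrow : rowFun G (Finset.univ \ {p, q}) p = 0 ∨
      rowFun G (Finset.univ \ {p, q}) p = rowFun G (Finset.univ \ {p, q}) q) :
    False := by
  apply hp.2 {p, q}
  refine ⟨Finset.subset_univ _, ?_, ?_, ?_⟩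
  · unfold cutRank
    rw [cutRankOn_eq_finrank, image_pair]
    set up := rowFun G (Finset.univ \ ({p, q} : Finset V)) p
    set uq := rowFun G (Finset.univ \ ({p, q} : Finset V)) q
    apply gf2_span_le_one (t := uq)
    rintro t (rfl | rfl)
    · rcases hrow with h | h
      · rw [h]; exact Submodule.zero_mem _
      · rw [h]; exact Submodule.subset_span rfl
    · exact Submodule.subset_span rfl
  · rw [Finset.card_insert_of_notMem (by simp [hpq]), Finset.card_singleton]
  · exact Finset.one_lt_card.mpr ⟨t0, ht0, t1, ht1, ht01⟩

end SplitLemma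


section Case2
variable {V : Type} [Fintype V] [DecidableEq V]

open scoped Classical

lemma zmod2_key : ∀ a b c d : ZMod 2, (a + (b + d * c)) + (b + d * c) + a = 0 := by decide

lemma case2 {G : SimpleGraph V} {x y z : V} {W : Finset V}
    (hW : W = Finset.univ \ {x, y, z})
    (hxy : x ≠ y) (hxz : x ≠ z) (hyz : y ≠ z)
    (heq : rowFun G W x = rowFun G W y)
    (haxz : G.Adj x z) (hayz : ¬ G.Adj y z)
    (hy0 : rowFun G W y ≠ 0) (hz0 : rowFun G W z ≠ 0)
    (hyz0 : rowFun G W y ≠ rowFun G W z) :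
    ∃ v, G.Adj z v ∧ Triplet (pivot G z v) x y z := by
  subst hW
  set W := Finset.univ \ ({x, y, z} : Finset V) with hWdef
  obtain ⟨jv, hadj_zv⟩ := rowFun_ne_zero_iff.mp hz0
  have hjne : ∀ j : ↥W, j.1 ≠ x ∧ j.1 ≠ y ∧ j.1 ≠ z := by
    intro j
    have hj2 : j.1 ∈ (Finset.univ \ ({x, y, z} : Finset V)) := j.2
    simp only [Finset.mem_sdiff, Finset.mem_univ, Finset.mem_insert, Finset.mem_singleton,
      true_and] at hj2
    tauto
  obtain ⟨hvx, hvy, hvz⟩ := hjne jv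
  set v := jv.1 with hvdef
  have hzv : z ≠ v := fun h => hvz h.symm
  refine ⟨v, hadj_zv, ?_⟩
  set G' := pivot G z v with hG'def
  have hchixz : chi G x z = 1 := chi_eq_one G haxz
  have hchiyz : chi G y z = 0 := chi_eq_zero G hayz
  have hchizv : chi G z v = 1 := chi_eq_one G hadj_zv
  have hxq : ∀ j : ↥W, chi G x j.1 = chi G y j.1 := fun j => congrFun heq j
  have hxyv : chi G x v = chi G y v := hxq jv
  have hvxs : chi G v x = chi G v y := by
    rw [chi_symm G v x, hxyv, chi_symm G y v]
  -- pointwise formulas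
  have hc : ∀ j : ↥W, rowFun G' W z j = (if j.1 = v then 1 else chi G v j.1) := by
    intro j
    obtain ⟨hjx, hjy, hjz⟩ := hjne j
    show chi G' z j.1 = _
    by_cases hjv : j.1 = v
    · rw [if_pos hjv, hjv, hG'def, pivot_chi_vw G hzv, hchizv]
    · rw [if_neg hjv, hG'def, pivot_chi_vy G hjz hjv hzv]
  have hb : ∀ j : ↥W,
      rowFun G' W y j = chi G y j.1 + chi G v y * chi G z j.1 := by
    intro j
    obtain ⟨hjx, hjy, hjz⟩ := hjne j
    show chi G' y j.1 = _
    by_cases hjv : j.1 = v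
    · rw [hjv, hG'def, pivot_chi_xw G hyz (Ne.symm hvy) hzv, hchiyz, hchizv, mul_one,
        chi_symm G y v]
      generalize chi G v y = t
      rcases (zmod2_cases t) with rfl | rfl <;> decide
    · rw [hG'def, pivot_chi_main G hyz (Ne.symm hvy) hjz hjv (Ne.symm hjy),
        chi_symm G z y, hchiyz, zero_mul]
      ring
  have ha : ∀ j : ↥W,
      rowFun G' W x j =
        (if j.1 = v then 1 else chi G v j.1) +
          (chi G y j.1 + chi G v y * chi G z j.1) := by
    intro j
    obtain ⟨hjx, hjy, hjz⟩ := hjne j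
    show chi G' x j.1 = _
    by_cases hjv : j.1 = v
    · rw [if_pos hjv, hjv, hG'def, pivot_chi_xw G hxz (Ne.symm hvx) hzv, hchixz, hchizv,
        mul_one, chi_symm G y v]
      generalize chi G v y = t
      rcases (zmod2_cases t) with rfl | rfl <;> decide
    · rw [if_neg hjv, hG'def, pivot_chi_main G hxz (Ne.symm hvx) hjz hjv (Ne.symm hjx),
        chi_symm G z x, hchixz, hvxs]
      rw [hxq j]
      ring
  -- values at jv
  have hxval : rowFun G' W x jv = 1 := by
    rw [ha jv, if_pos rfl, hchizv, chi_symm G y v]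
    generalize chi G v y = t
    rcases (zmod2_cases t) with rfl | rfl <;> decide
  have hyval : rowFun G' W y jv = 0 := by
    rw [hb jv, hchizv, chi_symm G y v]
    generalize chi G v y = t
    rcases (zmod2_cases t) with rfl | rfl <;> decide
  have hzval : rowFun G' W z jv = 1 := by rw [hc jv, if_pos rfl]
  -- vector facts
  have hX0 : rowFun G' W x ≠ 0 := by
    intro h
    have h1 := congrFun h jv
    rw [hxval] at h1
    exact one_ne_zero h1
  have hZ0 : rowFun G' W z ≠ 0 := by
    intro h
    have h1 := congrFun h jv
    rw [hzval] at h1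
    exact one_ne_zero h1
  have hXY : rowFun G' W x ≠ rowFun G' W y := by
    intro h
    have h1 := congrFun h jv
    rw [hxval, hyval] at h1
    exact one_ne_zero h1
  have hYZ : rowFun G' W y ≠ rowFun G' W z := by
    intro h
    have h1 := congrFun h jv
    rw [hyval, hzval] at h1
    exact one_ne_zero h1.symm
  have hY0 : rowFun G' W y ≠ 0 := by
    intro h
    rcases zmod2_cases (chi G v y) with h0 | h1
    · have heq2 : rowFun G' W y = rowFun G W y := by
        funext j
        rw [hb j, h0, zero_mul, add_zero]
        rfl
      rw [heq2] at h
      exact hy0 h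
    · have heq2 : rowFun G' W y = rowFun G W y + rowFun G W z := by
        funext j
        rw [hb j, h1, one_mul]
        rfl
      rw [heq2] at h
      exact hyz0 (gf2_add_eq_zero h)
  have hsum : rowFun G' W x + rowFun G' W y + rowFun G' W z = 0 := by
    funext j
    simp only [Pi.add_apply, Pi.zero_apply, ha j, hb j, hc j]
    exact zmod2_key _ _ _ _
  have hXZ : rowFun G' W x ≠ rowFun G' W z := by
    intro h
    have h5 : (rowFun G' W x + rowFun G' W z) + rowFun G' W y = 0 := by
      rw [← hsum]; abel
    have h6 : rowFun G' W x + rowFun G' W z = rowFun G' W y := gf2_add_eq_zero h5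
    rw [h, gf2_add_self] at h6
    exact hY0 h6.symm
  exact triplet_mk hxy hxz hyz hX0 hY0 hZ0 hXY hXZ hYZ hsum

end Case2


section CoreZero
variable {V : Type} [Fintype V] [DecidableEq V]

open scoped Classical

lemma chi_zero_iff (G : SimpleGraph V) (x y : V) : chi G x y = 0 ↔ ¬ G.Adj x y := by
  unfold chi; split <;> simp_all

lemma zmod2_add_self : ∀ a : ZMod 2, a + a = 0 := by decide

lemma zmod2_key2 : ∀ a b : ZMod 2, b + a + (a + b) = 0 := by decide
lemma zmod2_key3 : ∀ t : ZMod 2, t + t * 1 = 0 := by decide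

lemma univ_sdiff_perm1 (x y z : V) :
    (Finset.univ \ {x, z, y} : Finset V) = Finset.univ \ {x, y, z} := by
  ext t; simp only [Finset.mem_sdiff, Finset.mem_univ, Finset.mem_insert,
    Finset.mem_singleton, true_and]; tauto

lemma univ_sdiff_perm2 (x y z : V) :
    (Finset.univ \ {z, x, y} : Finset V) = Finset.univ \ {x, y, z} := by
  ext t; simp only [Finset.mem_sdiff, Finset.mem_univ, Finset.mem_insert,
    Finset.mem_singleton, true_and]; tauto

lemma triple_perm1 (x y z : V) : ({x, z, y} : Finset V) = {x, y, z} := by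
  ext t; simp only [Finset.mem_insert, Finset.mem_singleton]; tauto

lemma triple_perm2 (x y z : V) : ({z, x, y} : Finset V) = {x, y, z} := by
  ext t; simp only [Finset.mem_insert, Finset.mem_singleton]; tauto

lemma core_zero {G : SimpleGraph V} {x y z : V} {W : Finset V}
    (hW : W = Finset.univ \ {x, y, z}) (hp : IsPrime G Finset.univ)
    (hxy : x ≠ y) (hxz : x ≠ z) (hyz : y ≠ z)
    (hz : rowFun G W z = 0)
    (hx0 : rowFun G W x ≠ 0) (hy0 : rowFun G W y ≠ 0)
    (hxy0 : rowFun G W x ≠ rowFun G W y) :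
    ∃ G', PivotEquiv G G' ∧ Triplet G' x y z := by
  subst hW
  set W := Finset.univ \ ({x, y, z} : Finset V) with hWdef
  have hjne : ∀ j : ↥W, j.1 ≠ x ∧ j.1 ≠ y ∧ j.1 ≠ z := by
    intro j
    have hj2 : j.1 ∈ (Finset.univ \ ({x, y, z} : Finset V)) := j.2
    simp only [Finset.mem_sdiff, Finset.mem_univ, Finset.mem_insert, Finset.mem_singleton,
      true_and] at hj2
    tauto
  have hzj : ∀ j : ↥W, chi G z j.1 = 0 := fun j => congrFun hz j
  obtain ⟨jv, hadj_xv⟩ := rowFun_ne_zero_iff.mp hx0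
  obtain ⟨hvx, hvy, hvz⟩ := hjne jv
  set v := jv.1 with hvdef
  -- z is adjacent to both x and y, by primality
  have hazx : G.Adj z x := by
    by_contra hcon
    refine no_bad_pair hp (p := z) (q := y) hyz.symm
      (t0 := x) (t1 := v) ?_ ?_ ?_ (Or.inl ?_)
    · simp [Finset.mem_sdiff, hxz, hxy]
    · simp [Finset.mem_sdiff, hvz, hvy]
    · exact Ne.symm hvx
    · funext t
      have ht : t.1 ∈ (Finset.univ \ ({z, y} : Finset V)) := t.2
      simp only [Finset.mem_sdiff, Finset.mem_univ, Finset.mem_insert, Finset.mem_singleton,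
        true_and] at ht
      push_neg at ht
      show chi G z t.1 = 0
      by_cases htx : t.1 = x
      · rw [htx, chi_zero_iff]; exact hcon
      · have htW : t.1 ∈ W := by
          rw [hWdef]
          simp only [Finset.mem_sdiff, Finset.mem_univ, Finset.mem_insert,
            Finset.mem_singleton, true_and]
          push_neg
          exact ⟨htx, ht.2, ht.1⟩
        exact hzj ⟨t.1, htW⟩
  have hazy : G.Adj z y := by
    by_contra hcon
    refine no_bad_pair hp (p := z) (q := x) hxz.symm
      (t0 := y) (t1 := v) ?_ ?_ ?_ (Or.inl ?_)
    · have hyx : y ≠ x := Ne.symm hxy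
      simp [Finset.mem_sdiff, hyz, hyx]
    · simp [Finset.mem_sdiff, hvz, hvx]
    · exact Ne.symm hvy
    · funext t
      have ht : t.1 ∈ (Finset.univ \ ({z, x} : Finset V)) := t.2
      simp only [Finset.mem_sdiff, Finset.mem_univ, Finset.mem_insert, Finset.mem_singleton,
        true_and] at ht
      push_neg at ht
      show chi G z t.1 = 0
      by_cases hty : t.1 = y
      · rw [hty, chi_zero_iff]; exact hcon
      · have htW : t.1 ∈ W := by
          rw [hWdef]
          simp only [Finset.mem_sdiff, Finset.mem_univ, Finset.mem_insert,
            Finset.mem_singleton, true_and]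
          push_neg
          exact ⟨ht.2, hty, ht.1⟩
        exact hzj ⟨t.1, htW⟩
  have hchizx : chi G z x = 1 := chi_eq_one G hazx
  have hchizy : chi G z y = 1 := chi_eq_one G hazy
  by_cases haxy : G.Adj x y
  · -- one pivot on edge xy
    set G' := pivot G x y with hG'def
    have ha : ∀ j : ↥W, rowFun G' W x j = chi G y j.1 := by
      intro j
      obtain ⟨hjx, hjy, hjz⟩ := hjne j
      show chi G' x j.1 = _
      rw [hG'def, pivot_chi_vy G hjx hjy hxy]
    have hb : ∀ j : ↥W, rowFun G' W y j = chi G x j.1 := by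
      intro j
      obtain ⟨hjx, hjy, hjz⟩ := hjne j
      show chi G' y j.1 = _
      rw [hG'def, pivot_chi_wy G hjx hjy hxy]
    have hc : ∀ j : ↥W, rowFun G' W z j = chi G x j.1 + chi G y j.1 := by
      intro j
      obtain ⟨hjx, hjy, hjz⟩ := hjne j
      show chi G' z j.1 = _
      rw [hG'def, pivot_chi_main G (Ne.symm hxz) (Ne.symm hyz) hjx hjy (Ne.symm hjz),
        hzj j, chi_symm G x z, chi_symm G y z, hchizx, hchizy]
      ring
    have hvecx : rowFun G' W x = rowFun G W y := funext fun j => ha j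
    have hvecy : rowFun G' W y = rowFun G W x := funext fun j => hb j
    have hvecz : rowFun G' W z = rowFun G W x + rowFun G W y := funext fun j => by
      rw [hc j]; rfl
    refine ⟨G', Relation.ReflTransGen.single ⟨x, y, haxy, rfl⟩, ?_⟩
    have hZ0 : rowFun G' W z ≠ 0 := by
      rw [hvecz]
      intro h
      exact hxy0 (gf2_add_eq_zero h)
    have hXZ : rowFun G' W x ≠ rowFun G' W z := by
      rw [hvecx, hvecz]
      intro h
      have h2 : (rowFun G W y + rowFun G W y) = (rowFun G W x + rowFun G W y) + rowFun G W y :=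
        congrArg (fun t => t + rowFun G W y) h
      rw [gf2_add_self, add_assoc, gf2_add_self, add_zero] at h2
      exact hx0 h2.symm
    have hYZ : rowFun G' W y ≠ rowFun G' W z := by
      rw [hvecy, hvecz]
      intro h
      have h2 : (rowFun G W x + rowFun G W x) = (rowFun G W x + rowFun G W y) + rowFun G W x :=
        congrArg (fun t => t + rowFun G W x) h
      rw [gf2_add_self] at h2
      have h3 : rowFun G W x + rowFun G W y + rowFun G W x
          = rowFun G W y + (rowFun G W x + rowFun G W x) := by abel
      rw [h3, gf2_add_self, add_zero] at h2
      exact hy0 h2.symm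
    have hsum : rowFun G' W x + rowFun G' W y + rowFun G' W z = 0 := by
      funext j
      simp only [Pi.add_apply, Pi.zero_apply, ha j, hb j, hc j]
      exact zmod2_key2 _ _
    refine triplet_mk hxy hxz hyz ?_ ?_ hZ0 ?_ hXZ hYZ hsum
    · rw [hvecx]; exact hy0
    · rw [hvecy]; exact hx0
    · rw [hvecx, hvecy]; exact fun h => hxy0 h.symm
  · -- two pivots: first on edge (x,v)
    have hchixy : chi G x y = 0 := chi_eq_zero G haxy
    have hchixv : chi G x v = 1 := chi_eq_one G hadj_xv
    have hchizv : chi G z v = 0 := hzj jv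
    set G1 := pivot G x v with hG1def
    have hxv : x ≠ v := Ne.symm hvx
    have h1x : ∀ j : ↥W, rowFun G1 W x j = (if j.1 = v then 1 else chi G v j.1) := by
      intro j
      obtain ⟨hjx, hjy, hjz⟩ := hjne j
      show chi G1 x j.1 = _
      by_cases hjv : j.1 = v
      · rw [if_pos hjv, hjv, hG1def, pivot_chi_vw G hxv, hchixv]
      · rw [if_neg hjv, hG1def, pivot_chi_vy G hjx hjv hxv]
    have h1z : ∀ j : ↥W, rowFun G1 W z j = (if j.1 = v then 1 else chi G v j.1) := by
      intro j
      obtain ⟨hjx, hjy, hjz⟩ := hjne j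
      show chi G1 z j.1 = _
      by_cases hjv : j.1 = v
      · rw [if_pos hjv, hjv, hG1def, pivot_chi_xw G (Ne.symm hxz) (Ne.symm hvz) hxv, hchizx]
      · rw [if_neg hjv, hG1def,
          pivot_chi_main G (Ne.symm hxz) (Ne.symm hvz) hjx hjv (Ne.symm hjz),
          hzj j, chi_symm G x z, hchizx, chi_symm G v z, hchizv]
        ring
    have h1y : ∀ j : ↥W, rowFun G1 W y j = chi G y j.1 + chi G v y * chi G x j.1 := by
      intro j
      obtain ⟨hjx, hjy, hjz⟩ := hjne j
      show chi G1 y j.1 = _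
      by_cases hjv : j.1 = v
      · have hchiyx : chi G y x = 0 := (chi_symm G y x).trans hchixy
        rw [hjv, hG1def, pivot_chi_xw G (Ne.symm hxy) (Ne.symm hvy) hxv,
          hchiyx, hchixv, mul_one, chi_symm G y v]
        exact (zmod2_add_self _).symm
      · rw [hG1def, pivot_chi_main G (Ne.symm hxy) (Ne.symm hvy) hjx hjv (Ne.symm hjy),
          hchixy]
        ring
    have hstep1 : PivotStep G G1 := ⟨x, v, hadj_xv, rfl⟩
    -- adjacency pattern in G1
    have hA1 : chi G1 x y = chi G v y := by
      rw [hG1def, pivot_chi_vy G (Ne.symm hxy) (Ne.symm hvy) hxv]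
    have hA2 : chi G1 z y = 1 + chi G v y := by
      rw [hG1def,
        pivot_chi_main G (Ne.symm hxz) (Ne.symm hvz) (Ne.symm hxy) (Ne.symm hvy) (Ne.symm hyz),
        hchizy, chi_symm G x z, hchizx, chi_symm G v z, hchizv, hchixy]
      ring
    have hxjv : rowFun G1 W x jv = 1 := by rw [h1x jv, if_pos rfl]
    have hzjv : rowFun G1 W z jv = 1 := by rw [h1z jv, if_pos rfl]
    have hyjv : rowFun G1 W y jv = 0 := by
      rw [h1y jv, hchixv, mul_one, chi_symm G y v, zmod2_add_self]
    have hX1 : rowFun G1 W x ≠ 0 := by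
      intro h
      have h1 := congrFun h jv
      rw [hxjv] at h1
      exact one_ne_zero h1
    have hZ1 : rowFun G1 W z ≠ 0 := by
      intro h
      have h1 := congrFun h jv
      rw [hzjv] at h1
      exact one_ne_zero h1
    have hXY1 : rowFun G1 W x ≠ rowFun G1 W y := by
      intro h
      have h1 := congrFun h jv
      rw [hxjv, hyjv] at h1
      exact one_ne_zero h1
    have hZY1 : rowFun G1 W z ≠ rowFun G1 W y := by
      intro h
      have h1 := congrFun h jv
      rw [hzjv, hyjv] at h1
      exact one_ne_zero h1
    by_cases hvyA : G.Adj v y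
    · -- x is the G1-neighbour of y among {x, z}
      have hcvy : chi G v y = 1 := chi_eq_one G hvyA
      have hadjG1xy : G1.Adj x y := by
        rw [adj_iff_chi, hA1, hcvy]
      have hnadjG1zy : ¬ G1.Adj z y := by
        rw [← chi_zero_iff, hA2, hcvy]
        decide
      have heq1 : rowFun G1 W x = rowFun G1 W z := funext fun j => by rw [h1x j, h1z j]
      have hYvec : rowFun G1 W y = rowFun G W y + rowFun G W x := by
        funext j
        rw [h1y j, hcvy, one_mul]
        rfl
      have hY1 : rowFun G1 W y ≠ 0 := by
        rw [hYvec]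
        intro h
        exact hxy0 (gf2_add_eq_zero h).symm
      obtain ⟨w, hadj_yw, htrip⟩ :=
        case2 (G := G1) (x := x) (y := z) (z := y) (W := W)
          (hWdef.trans (univ_sdiff_perm1 x y z).symm)
          hxz hxy (Ne.symm hyz) heq1 hadjG1xy hnadjG1zy hZ1 hY1 hZY1
      exact ⟨pivot G1 y w,
        Relation.ReflTransGen.tail (Relation.ReflTransGen.single hstep1) ⟨y, w, hadj_yw, rfl⟩,
        triplet_perm (triple_perm1 x y z) htrip⟩
    · -- z is the G1-neighbour of y among {x, z}
      have hcvy : chi G v y = 0 := chi_eq_zero G hvyA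
      have hadjG1zy : G1.Adj z y := by
        rw [adj_iff_chi, hA2, hcvy, add_zero]
      have hnadjG1xy : ¬ G1.Adj x y := by
        rw [← chi_zero_iff, hA1, hcvy]
      have heq1 : rowFun G1 W z = rowFun G1 W x := funext fun j => by rw [h1x j, h1z j]
      have hYvec : rowFun G1 W y = rowFun G W y := by
        funext j
        rw [h1y j, hcvy, zero_mul, add_zero]
        rfl
      have hY1 : rowFun G1 W y ≠ 0 := by
        rw [hYvec]
        exact hy0
      obtain ⟨w, hadj_yw, htrip⟩ :=
        case2 (G := G1) (x := z) (y := x) (z := y) (W := W)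
          (hWdef.trans (univ_sdiff_perm2 x y z).symm)
          (Ne.symm hxz) (Ne.symm hyz) hxy heq1 hadjG1zy hnadjG1xy hX1 hY1 hXY1
      exact ⟨pivot G1 y w,
        Relation.ReflTransGen.tail (Relation.ReflTransGen.single hstep1) ⟨y, w, hadj_yw, rfl⟩,
        triplet_perm (triple_perm2 x y z) htrip⟩

end CoreZero


section CoreEq
variable {V : Type} [Fintype V] [DecidableEq V]

open scoped Classical

lemma univ_sdiff_perm3 (x y z : V) :
    (Finset.univ \ {y, x, z} : Finset V) = Finset.univ \ {x, y, z} := by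
  ext t; simp only [Finset.mem_sdiff, Finset.mem_univ, Finset.mem_insert,
    Finset.mem_singleton, true_and]; tauto

lemma triple_perm3 (x y z : V) : ({y, x, z} : Finset V) = {x, y, z} := by
  ext t; simp only [Finset.mem_insert, Finset.mem_singleton]; tauto

lemma core_eq {G : SimpleGraph V} {x y z : V} {W : Finset V}
    (hW : W = Finset.univ \ {x, y, z}) (hp : IsPrime G Finset.univ)
    (hxy : x ≠ y) (hxz : x ≠ z) (hyz : y ≠ z)
    (heq : rowFun G W x = rowFun G W y)
    (hx0 : rowFun G W x ≠ 0) (hz0 : rowFun G W z ≠ 0)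
    (hxz0 : rowFun G W x ≠ rowFun G W z) :
    ∃ G', PivotEquiv G G' ∧ Triplet G' x y z := by
  have hy0 : rowFun G W y ≠ 0 := by rw [← heq]; exact hx0
  have hyz0 : rowFun G W y ≠ rowFun G W z := by rw [← heq]; exact hxz0
  obtain ⟨jv, hadj_zv⟩ := rowFun_ne_zero_iff.mp hz0
  have hjne : ∀ j : ↥W, j.1 ≠ x ∧ j.1 ≠ y ∧ j.1 ≠ z := by
    intro j
    have hj2 : j.1 ∈ (Finset.univ \ ({x, y, z} : Finset V)) := by rw [← hW]; exact j.2
    simp only [Finset.mem_sdiff, Finset.mem_univ, Finset.mem_insert, Finset.mem_singleton,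
      true_and] at hj2
    tauto
  obtain ⟨hvx, hvy, hvz⟩ := hjne jv
  set v := jv.1 with hvdef
  -- primality forces exactly one of x, y adjacent to z
  have hkey : ¬ (G.Adj x z ↔ G.Adj y z) := by
    intro hiff
    refine no_bad_pair hp (p := x) (q := y) hxy (t0 := z) (t1 := v) ?_ ?_ (Ne.symm hvz)
      (Or.inr ?_)
    · have hzx : z ≠ x := Ne.symm hxz
      have hzy : z ≠ y := Ne.symm hyz
      simp [Finset.mem_sdiff, hzx, hzy]
    · simp [Finset.mem_sdiff, hvx, hvy]
    · funext t
      have ht : t.1 ∈ (Finset.univ \ ({x, y} : Finset V)) := t.2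
      simp only [Finset.mem_sdiff, Finset.mem_univ, Finset.mem_insert, Finset.mem_singleton,
        true_and] at ht
      push_neg at ht
      show chi G x t.1 = chi G y t.1
      by_cases htz : t.1 = z
      · rw [htz]
        unfold chi
        by_cases hxadj : G.Adj x z
        · rw [if_pos hxadj, if_pos (hiff.mp hxadj)]
        · rw [if_neg hxadj, if_neg (fun h => hxadj (hiff.mpr h))]
      · have htW : t.1 ∈ W := by
          rw [hW]
          simp only [Finset.mem_sdiff, Finset.mem_univ, Finset.mem_insert,
            Finset.mem_singleton, true_and]
          push_neg
          exact ⟨ht.1, ht.2, htz⟩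
        exact congrFun heq ⟨t.1, htW⟩
  by_cases haxz : G.Adj x z
  · have hayz : ¬ G.Adj y z := fun h => hkey ⟨fun _ => h, fun _ => haxz⟩
    obtain ⟨w, hadj_zw, htrip⟩ := case2 hW hxy hxz hyz heq haxz hayz hy0 hz0 hyz0
    exact ⟨pivot G z w, Relation.ReflTransGen.single ⟨z, w, hadj_zw, rfl⟩, htrip⟩
  · have hayz : G.Adj y z := by
      by_contra h
      exact hkey ⟨fun h2 => absurd h2 haxz, fun h2 => absurd h2 h⟩
    obtain ⟨w, hadj_zw, htrip⟩ :=
      case2 (G := G) (x := y) (y := x) (z := z) (W := W)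
        (hW.trans (univ_sdiff_perm3 x y z).symm)
        (Ne.symm hxy) hyz hxz heq.symm hayz haxz hx0 hz0 hxz0
    exact ⟨pivot G z w, Relation.ReflTransGen.single ⟨z, w, hadj_zw, rfl⟩,
      triplet_perm (triple_perm3 x y z) htrip⟩

end CoreEq


theorem exists_pivotEquiv_triplet {G : SimpleGraph V} (hp : IsPrime G Finset.univ)
    {a b c : V} (hab : a ≠ b) (hac : a ≠ c) (hbc : b ≠ c)
    (hr : cutRank G Finset.univ {a, b, c} = 2) :
    ∃ G' : SimpleGraph V, PivotEquiv G G' ∧ Triplet G' a b c := by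
  classical
  set W := Finset.univ \ ({a, b, c} : Finset V) with hWdef
  set ua := rowFun G W a with huadef
  set ub := rowFun G W b with hubdef
  set uc := rowFun G W c with hucdef
  have hrank : Module.finrank (ZMod 2)
      (Submodule.span (ZMod 2) ({ua, ub, uc} : Set (↥W → ZMod 2))) = 2 := by
    unfold cutRank at hr
    rw [cutRankOn_eq_finrank, image_triple] at hr
    exact hr
  have hle : ∀ t : ↥W → ZMod 2,
      ({ua, ub, uc} : Set (↥W → ZMod 2)) ⊆ ↑(Submodule.span (ZMod 2) ({t} : Set (↥W → ZMod 2)))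
      → False := by
    intro t hsub
    have h1 := gf2_span_le_one hsub
    rw [hrank] at h1
    omega
  have sub3 : ∀ p q r t : ↥W → ZMod 2, (p = 0 ∨ p = t) → (q = 0 ∨ q = t) → (r = 0 ∨ r = t) →
      ({p, q, r} : Set (↥W → ZMod 2)) ⊆ ↑(Submodule.span (ZMod 2) ({t} : Set (↥W → ZMod 2))) := by
    intro p q r t hp hq hrr s hs
    have hmem : ∀ u : ↥W → ZMod 2, (u = 0 ∨ u = t) →
        u ∈ (Submodule.span (ZMod 2) ({t} : Set (↥W → ZMod 2)) : Set (↥W → ZMod 2)) := by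
      rintro u (rfl | rfl)
      · exact (Submodule.span (ZMod 2) ({t} : Set (↥W → ZMod 2))).zero_mem
      · exact Submodule.subset_span rfl
    rcases hs with rfl | rfl | rfl
    · exact hmem _ hp
    · exact hmem _ hq
    · exact hmem _ hrr
  by_cases h3 : uc = 0
  · have h1 : ua ≠ 0 := by
      intro h
      exact hle ub (sub3 _ _ _ _ (Or.inl h) (Or.inr rfl) (Or.inl h3))
    have h2 : ub ≠ 0 := by
      intro h
      exact hle ua (sub3 _ _ _ _ (Or.inr rfl) (Or.inl h) (Or.inl h3))
    have h4 : ua ≠ ub := by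
      intro h
      exact hle ua (sub3 _ _ _ _ (Or.inr rfl) (Or.inr h.symm) (Or.inl h3))
    exact core_zero hWdef hp hab hac hbc h3 h1 h2 h4
  · by_cases h1 : ua = 0
    · have h2 : ub ≠ 0 := by
        intro h
        exact hle uc (sub3 _ _ _ _ (Or.inl h1) (Or.inl h) (Or.inr rfl))
      have h6 : ub ≠ uc := by
        intro h
        exact hle uc (sub3 _ _ _ _ (Or.inl h1) (Or.inr h) (Or.inr rfl))
      obtain ⟨G', hpe, htrip⟩ :=
        core_zero (G := G) (x := b) (y := c) (z := a) (W := W)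
          (hWdef.trans (by ext t; simp only [Finset.mem_sdiff, Finset.mem_univ,
            Finset.mem_insert, Finset.mem_singleton, true_and]; tauto))
          hp hbc (Ne.symm hab) (Ne.symm hac) h1 h2 h3 h6
      exact ⟨G', hpe, triplet_perm (show ({b, c, a} : Finset V) = {a, b, c} by
        ext t; simp only [Finset.mem_insert, Finset.mem_singleton]; tauto) htrip⟩
    · by_cases h2 : ub = 0
      · have h5 : ua ≠ uc := by
          intro h
          exact hle ua (sub3 _ _ _ _ (Or.inr rfl) (Or.inl h2) (Or.inr h.symm))
        obtain ⟨G', hpe, htrip⟩ :=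
          core_zero (G := G) (x := a) (y := c) (z := b) (W := W)
            (hWdef.trans (by ext t; simp only [Finset.mem_sdiff, Finset.mem_univ,
              Finset.mem_insert, Finset.mem_singleton, true_and]; tauto))
            hp hac hab (Ne.symm hbc) h2 h1 h3 h5
        exact ⟨G', hpe, triplet_perm (show ({a, c, b} : Finset V) = {a, b, c} by
          ext t; simp only [Finset.mem_insert, Finset.mem_singleton]; tauto) htrip⟩
      · by_cases h4 : ua = ub
        · have h5 : ua ≠ uc := by
            intro h
            exact hle ua (sub3 _ _ _ _ (Or.inr rfl) (Or.inr h4.symm) (Or.inr h.symm))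
          exact core_eq hWdef hp hab hac hbc h4 h1 h3 h5
        · by_cases h5 : ua = uc
          · obtain ⟨G', hpe, htrip⟩ :=
              core_eq (G := G) (x := a) (y := c) (z := b) (W := W)
                (hWdef.trans (by ext t; simp only [Finset.mem_sdiff, Finset.mem_univ,
                  Finset.mem_insert, Finset.mem_singleton, true_and]; tauto))
                hp hac hab (Ne.symm hbc) h5 h1 h2 h4
            exact ⟨G', hpe, triplet_perm (show ({a, c, b} : Finset V) = {a, b, c} by
              ext t; simp only [Finset.mem_insert, Finset.mem_singleton]; tauto) htrip⟩
          · by_cases h6 : ub = uc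
            · obtain ⟨G', hpe, htrip⟩ :=
                core_eq (G := G) (x := b) (y := c) (z := a) (W := W)
                  (hWdef.trans (by ext t; simp only [Finset.mem_sdiff, Finset.mem_univ,
                    Finset.mem_insert, Finset.mem_singleton, true_and]; tauto))
                  hp hbc (Ne.symm hab) (Ne.symm hac) h6 h2 h1 (Ne.symm h4)
              exact ⟨G', hpe, triplet_perm (show ({b, c, a} : Finset V) = {a, b, c} by
                ext t; simp only [Finset.mem_insert, Finset.mem_singleton]; tauto) htrip⟩
            · -- already a triplet
              refine ⟨G, Relation.ReflTransGen.refl, hr, ?_⟩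
              intro t htmem
              simp only [Finset.mem_insert, Finset.mem_singleton] at htmem
              rcases htmem with rfl | rfl | rfl
              · rw [cutRank_pair_eq' G (Or.inl rfl) (sdiff_triple_left hab hac)]
                exact gf2_finrank_span_pair h2 h3 h6
              · rw [cutRank_pair_eq' G (Or.inr (Or.inl rfl)) (sdiff_triple_mid hab hbc)]
                exact gf2_finrank_span_pair h1 h3 h5
              · rw [cutRank_pair_eq' G (Or.inr (Or.inr rfl)) (sdiff_triple_right hac hbc)]
                exact gf2_finrank_span_pair h1 h2 h4
end
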